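/- arXiv:1806.03794 — 5 statements merged into one kernel-verified Lean document; each statement's English description precedes it below -/
import Mathlib

section
/- Let f, g : ℝ^n → ℝ^p be maps with f(0) = g(0) = 0 that are differentiable at 0. Suppose there exist r > 0, L ≥ 1 and a map φ : B(0,r) → ℝ^n with φ(0) = 0 such that (1/L)·‖x − y‖ ≤ ‖φ(x) − φ(y)‖ ≤ L·‖x − y‖ for all x, y ∈ B(0,r), and f(φ(x)) = g(x) for all x ∈ B(0,r). Then the rank of the derivative Df(0) : ℝ^n → ℝ^p equals the rank of Dg(0) : ℝ^n → ℝ^p. -/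
open Metric Set MeasureTheory
open scoped RealInnerProductSpace ENNReal NNReal


variable {n p : ℕ}

local notation "X" => EuclideanSpace ℝ (Fin n)
local notation "Y" => EuclideanSpace ℝ (Fin p)

private lemma tail_ineq (N P xn c L ε : ℝ) (hN : 0 ≤ N) (hxn : 0 ≤ xn)
    (hc0 : 0 < c) (hL : 1 ≤ L) (hε : 0 < ε)
    (hc : c = ε / (2 * (N + 1) * L)) (hP : P ≤ L * xn) :
    N * (c * P) + N * (c * xn) ≤ ε * xn := by
  have hL0 : (0:ℝ) < L := lt_of_lt_of_le one_pos hL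
  have h1 : N * (c * P) ≤ N * (c * (L * xn)) :=
    mul_le_mul_of_nonneg_left (mul_le_mul_of_nonneg_left hP hc0.le) hN
  have h2 : N * (c * (L * xn)) + N * (c * xn) = c * (N * (L + 1)) * xn := by ring
  have h3 : c * (N * (L + 1)) ≤ ε := by
    rw [hc, div_mul_eq_mul_div, div_le_iff₀ (by positivity)]
    nlinarith [mul_nonneg hN (sub_nonneg.2 hL)]
  have h4 : c * (N * (L + 1)) * xn ≤ ε * xn := mul_le_mul_of_nonneg_right h3 hxn
  linarith

/-- Analytic estimate: for any covector `u`, the function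
`x ↦ ⟪u, Df(0)(φ x)⟫ - ⟪u, Dg(0) x⟫` is `o(x)` on the ball, in quantitative form. -/
lemma aux_small (f g : X → Y)
    (hf0 : f 0 = 0) (hg0 : g 0 = 0)
    (hfd : DifferentiableAt ℝ f 0) (hgd : DifferentiableAt ℝ g 0)
    (r L : ℝ) (hr : 0 < r) (hL : 1 ≤ L)
    (φ : X → X) (hφ0 : φ 0 = 0)
    (hbl : ∀ x ∈ ball (0 : X) r, ∀ y ∈ ball (0 : X) r,
      (1 / L) * ‖x - y‖ ≤ ‖φ x - φ y‖ ∧ ‖φ x - φ y‖ ≤ L * ‖x - y‖)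
    (heq : ∀ x ∈ ball (0 : X) r, f (φ x) = g x) (u : Y) :
    ∀ ε > 0, ∃ t, 0 < t ∧ t < r ∧ ∀ x : X, ‖x‖ ≤ t →
      |⟪u, (fderiv ℝ f 0) (φ x)⟫ - ⟪u, (fderiv ℝ g 0) x⟫| ≤ ε * ‖x‖ := by
  intro ε hε
  have hL0 : 0 < L := lt_of_lt_of_le one_pos hL
  set A := fderiv ℝ f 0 with hA
  set B := fderiv ℝ g 0 with hB
  obtain ⟨c, hc⟩ : ∃ c : ℝ, c = ε / (2 * (‖u‖ + 1) * L) := ⟨_, rfl⟩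
  have hc0 : 0 < c := by rw [hc]; positivity
  have hfo := hasFDerivAt_iff_isLittleO_nhds_zero.1 hfd.hasFDerivAt
  have hgo := hasFDerivAt_iff_isLittleO_nhds_zero.1 hgd.hasFDerivAt
  rw [Asymptotics.isLittleO_iff] at hfo hgo
  obtain ⟨δf, hδf0, hδf⟩ := Metric.eventually_nhds_iff.1 (hfo hc0)
  obtain ⟨δg, hδg0, hδg⟩ := Metric.eventually_nhds_iff.1 (hgo hc0)
  have hφL : ∀ x ∈ ball (0 : X) r, ‖φ x‖ ≤ L * ‖x‖ := by
    intro x hx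
    have := (hbl x hx 0 (mem_ball_self hr)).2
    simpa [hφ0] using this
  refine ⟨min (min (δf / (2 * L)) (δg / 2)) (r / 2), by positivity, ?_, ?_⟩
  · exact lt_of_le_of_lt (min_le_right _ _) (by linarith)
  · intro x hx
    have hxr : x ∈ ball (0 : X) r := by
      rw [mem_ball_zero_iff]
      calc ‖x‖ ≤ _ := hx
        _ ≤ r / 2 := min_le_right _ _
        _ < r := by linarith
    have hxδg : ‖x‖ < δg := by
      have h1 : ‖x‖ ≤ δg / 2 := hx.trans ((min_le_left _ _).trans (min_le_right _ _))
      linarith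
    have hφxδf : ‖φ x‖ < δf := by
      have h1 : ‖x‖ ≤ δf / (2 * L) := hx.trans ((min_le_left _ _).trans (min_le_left _ _))
      have h2 := hφL x hxr
      have : L * ‖x‖ ≤ L * (δf / (2 * L)) := by
        exact mul_le_mul_of_nonneg_left h1 hL0.le
      have h3 : L * (δf / (2 * L)) = δf / 2 := by field_simp
      have h4 : L * ‖x‖ ≤ δf / 2 := by rw [← h3]; exact this
      linarith only [h2, h4, hδf0]
    have hf' : ‖f (φ x) - A (φ x)‖ ≤ c * ‖φ x‖ := by
      have := hδf (y := φ x) (by simpa using hφxδf)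
      simpa [hf0] using this
    have hg' : ‖g x - B x‖ ≤ c * ‖x‖ := by
      have := hδg (y := x) (by simpa using hxδg)
      simpa [hg0] using this
    have hkey : ⟪u, A (φ x)⟫ - ⟪u, B x⟫ = ⟪u, A (φ x) - f (φ x)⟫ + ⟪u, g x - B x⟫ := by
      rw [inner_sub_right, inner_sub_right, heq x hxr]
      ring
    have h1 : |⟪u, A (φ x) - f (φ x)⟫| ≤ ‖u‖ * (c * ‖φ x‖) := by
      calc |⟪u, A (φ x) - f (φ x)⟫| ≤ ‖u‖ * ‖A (φ x) - f (φ x)‖ := abs_real_inner_le_norm _ _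
        _ ≤ ‖u‖ * (c * ‖φ x‖) := by
            refine mul_le_mul_of_nonneg_left ?_ (norm_nonneg _)
            rw [norm_sub_rev]; exact hf'
    have h2 : |⟪u, g x - B x⟫| ≤ ‖u‖ * (c * ‖x‖) := by
      calc |⟪u, g x - B x⟫| ≤ ‖u‖ * ‖g x - B x‖ := abs_real_inner_le_norm _ _
        _ ≤ ‖u‖ * (c * ‖x‖) := mul_le_mul_of_nonneg_left hg' (norm_nonneg _)
    have h3 : ‖φ x‖ ≤ L * ‖x‖ := hφL x hxr
    have habs := (abs_add_le _ _).trans (add_le_add h1 h2)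
    have hfin : ‖u‖ * (c * ‖φ x‖) + ‖u‖ * (c * ‖x‖) ≤ ε * ‖x‖ :=
      tail_ineq ‖u‖ ‖φ x‖ ‖x‖ c L ε (norm_nonneg _) (norm_nonneg _) hc0 hL hε hc h3
    rw [hkey]
    exact habs.trans hfin



private lemma coord_le_norm {n : ℕ} (z : EuclideanSpace ℝ (Fin n)) (i : Fin n) :
    |z i| ≤ ‖z‖ := by
  rw [EuclideanSpace.norm_eq]
  calc |z i| = √(‖z i‖ ^ 2) := by rw [Real.norm_eq_abs, Real.sqrt_sq_eq_abs, abs_abs]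
    _ ≤ √(∑ j, ‖z j‖ ^ 2) := Real.sqrt_le_sqrt
        (Finset.single_le_sum (f := fun j => ‖z j‖ ^ 2) (fun j _ => sq_nonneg _)
          (Finset.mem_univ i))

private lemma final_contra (P Q : ℝ) (hP0 : 0 < P) (hQ0 : 0 ≤ Q)
    (h : ∀ ε : ℝ, 0 < ε → P ≤ Q * ε) : False := by
  have h1 := h (P / (2 * (Q + 1))) (by positivity)
  have h2 : Q * (P / (2 * (Q + 1))) ≤ P / 2 := by
    rw [mul_div_assoc', div_le_div_iff₀ (by positivity) (by positivity)]
    nlinarith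
  linarith

/-- A unit covector cannot be asymptotically annihilated along a bi-Lipschitz image:
the key measure-theoretic step. -/
private lemma key {n : ℕ} (w : EuclideanSpace ℝ (Fin n)) (hw1 : ‖w‖ = 1)
    (r L : ℝ) (hr : 0 < r) (hL : 1 ≤ L)
    (φ : EuclideanSpace ℝ (Fin n) → EuclideanSpace ℝ (Fin n)) (hφ0 : φ 0 = 0)
    (hbl : ∀ x ∈ ball (0 : EuclideanSpace ℝ (Fin n)) r,
      ∀ y ∈ ball (0 : EuclideanSpace ℝ (Fin n)) r,
        (1 / L) * ‖x - y‖ ≤ ‖φ x - φ y‖ ∧ ‖φ x - φ y‖ ≤ L * ‖x - y‖)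
    (hsmall : ∀ ε > 0, ∃ t, 0 < t ∧ t < r ∧ ∀ x : EuclideanSpace ℝ (Fin n), ‖x‖ ≤ t →
      |⟪w, φ x⟫| ≤ ε * t) : False := by
  classical
  have hL0 : (0:ℝ) < L := lt_of_lt_of_le one_pos hL
  have hn : n ≠ 0 := by
    rintro rfl
    rw [EuclideanSpace.norm_eq] at hw1
    simp at hw1
  have hnpos : 0 < n := Nat.pos_of_ne_zero hn
  set i₀ : Fin n := ⟨0, hnpos⟩ with hi₀
  set e₀ : EuclideanSpace ℝ (Fin n) := EuclideanSpace.single i₀ (1:ℝ) with he₀def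
  have he₀ : ‖e₀‖ = 1 := by rw [he₀def, EuclideanSpace.norm_single]; norm_num
  set R := Submodule.reflection (ℝ ∙ (w - e₀))ᗮ with hRdef
  have hRw : R w = e₀ := Submodule.reflection_sub (by rw [hw1, he₀])
  -- the identity between the Euclidean space and the sup-metric pi space
  set eqv := WithLp.equiv 2 (Fin n → ℝ) with heqv
  have hlip : LipschitzWith 1 ⇑eqv := PiLp.lipschitzWith_ofLp 2 _
  obtain ⟨c₁, hanti⟩ : ∃ c₁ : ℝ≥0, AntilipschitzWith c₁ ⇑eqv :=
    ⟨_, PiLp.antilipschitzWith_ofLp 2 _⟩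
  have hcR0 : (0:ℝ) ≤ (c₁ : ℝ) := c₁.coe_nonneg
  -- the measure `μH[n]` on the pi space is the Lebesgue measure
  have hpi : (μH[(n:ℝ)] : Measure (Fin n → ℝ)) = volume := by
    simpa using hausdorffMeasure_pi_real (ι := Fin n)
  -- injectivity of φ on the ball
  have hinj : ∀ x ∈ ball (0 : EuclideanSpace ℝ (Fin n)) r,
      ∀ y ∈ ball (0 : EuclideanSpace ℝ (Fin n)) r, φ x = φ y → x = y := by
    intro x hx y hy hxy
    have h1 := (hbl x hx y hy).1
    rw [hxy, sub_self, norm_zero] at h1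
    have h1L : (0:ℝ) < 1 / L := by positivity
    have h2 : ‖x - y‖ ≤ 0 := by nlinarith [norm_nonneg (x - y)]
    have h3 : x - y = 0 := norm_le_zero_iff.1 h2
    linear_combination (norm := abel) h3
  have hφL : ∀ x ∈ ball (0 : EuclideanSpace ℝ (Fin n)) r, ‖φ x‖ ≤ L * ‖x‖ := by
    intro x hx
    have := (hbl x hx 0 (mem_ball_self hr)).2
    simpa [hφ0] using this
  -- main estimate for every ε
  have main : ∀ ε : ℝ, 0 < ε →
      (2 / ((c₁ : ℝ) + 1)) ^ n ≤ (L ^ n * (c₁ : ℝ) ^ n * 2 * (2 * L) ^ (n - 1)) * ε := by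
    intro ε hε
    obtain ⟨t, ht0, htr, hsm⟩ := hsmall ε hε
    set K : Set (EuclideanSpace ℝ (Fin n)) := closedBall 0 t with hKdef
    have hKball : K ⊆ ball (0 : EuclideanSpace ℝ (Fin n)) r := closedBall_subset_ball htr
    set E := φ '' K with hEdef
    -- the "inverse" map of φ on E
    set ψ : EuclideanSpace ℝ (Fin n) → EuclideanSpace ℝ (Fin n) :=
      fun z => if h : ∃ x, x ∈ K ∧ φ x = z then h.choose else 0 with hψdef
    have hψ : ∀ z ∈ E, ψ z ∈ K ∧ φ (ψ z) = z := by
      rintro z ⟨x, hx, rfl⟩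
      have hex : ∃ x', x' ∈ K ∧ φ x' = φ x := ⟨x, hx, rfl⟩
      simp only [hψdef, dif_pos hex]
      exact hex.choose_spec
    have hKE : ψ '' E = K := by
      apply Set.Subset.antisymm
      · rintro _ ⟨z, hz, rfl⟩
        exact (hψ z hz).1
      · intro x hx
        refine ⟨φ x, Set.mem_image_of_mem _ hx, ?_⟩
        obtain ⟨h1, h2⟩ := hψ (φ x) (Set.mem_image_of_mem _ hx)
        exact hinj _ (hKball h1) _ (hKball hx) h2
    have hψlip : LipschitzOnWith L.toNNReal ψ E := by
      rw [lipschitzOnWith_iff_dist_le_mul]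
      intro z hz z' hz'
      obtain ⟨hz1, hz2⟩ := hψ z hz
      obtain ⟨hz1', hz2'⟩ := hψ z' hz'
      have hlb := (hbl (ψ z) (hKball hz1) (ψ z') (hKball hz1')).1
      rw [hz2, hz2'] at hlb
      rw [dist_eq_norm, dist_eq_norm, Real.coe_toNNReal _ hL0.le]
      have h7 : L * ((1 / L) * ‖ψ z - ψ z'‖) = ‖ψ z - ψ z'‖ := by field_simp
      nlinarith [mul_le_mul_of_nonneg_left hlb hL0.le]
    -- measure chain
    have hd0 : (0:ℝ) ≤ (n:ℝ) := Nat.cast_nonneg n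
    -- lower bound : small pi-ball sits inside K
    set s : ℝ := t / ((c₁ : ℝ) + 1) with hsdef
    have hs0 : 0 < s := by positivity
    have hlow1 : eqv.symm '' Metric.ball (0 : Fin n → ℝ) s ⊆ K := by
      rintro _ ⟨y, hy, rfl⟩
      rw [hKdef, mem_closedBall_zero_iff]
      have h8 : dist (eqv.symm y) (eqv.symm 0) ≤ (c₁ : ℝ) * dist (eqv (eqv.symm y)) (eqv (eqv.symm 0)) := by
        have := hanti.le_mul_dist (eqv.symm y) (eqv.symm 0)
        simpa using this
      rw [Equiv.apply_symm_apply, Equiv.apply_symm_apply] at h8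
      have h9 : (eqv.symm 0 : EuclideanSpace ℝ (Fin n)) = 0 := rfl
      rw [h9] at h8
      rw [dist_zero_right, dist_zero_right] at h8
      have h10 : ‖y‖ < s := by rwa [mem_ball_zero_iff] at hy
      have h11 : (c₁ : ℝ) * s ≤ t := by
        rw [hsdef, ← mul_div_assoc, div_le_iff₀ (by positivity)]
        nlinarith
      calc ‖eqv.symm y‖ ≤ (c₁ : ℝ) * ‖y‖ := h8
        _ ≤ (c₁ : ℝ) * s := mul_le_mul_of_nonneg_left h10.le hcR0
        _ ≤ t := h11
    have hlow : ENNReal.ofReal ((2 * s) ^ n) ≤ μH[(n:ℝ)] K := by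
      have hvol : volume (Metric.ball (0 : Fin n → ℝ) s) = ENNReal.ofReal ((2 * s) ^ n) := by
        rw [Real.volume_pi_ball _ hs0, Fintype.card_fin]
      have him : eqv '' (eqv.symm '' Metric.ball (0 : Fin n → ℝ) s)
          = Metric.ball (0 : Fin n → ℝ) s := by
        rw [Set.image_image]
        simp
      calc ENNReal.ofReal ((2 * s) ^ n)
          = μH[(n:ℝ)] (Metric.ball (0 : Fin n → ℝ) s) := by rw [hpi, hvol]
        _ = μH[(n:ℝ)] (eqv '' (eqv.symm '' Metric.ball (0 : Fin n → ℝ) s)) := by rw [him]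
        _ ≤ ((1:ℝ≥0) : ℝ≥0∞) ^ (n:ℝ) * μH[(n:ℝ)] (eqv.symm '' Metric.ball (0 : Fin n → ℝ) s) :=
            hlip.hausdorffMeasure_image_le hd0 _
        _ = μH[(n:ℝ)] (eqv.symm '' Metric.ball (0 : Fin n → ℝ) s) := by
            rw [ENNReal.coe_one, ENNReal.one_rpow, one_mul]
        _ ≤ μH[(n:ℝ)] K := measure_mono hlow1
    -- upper bound chain
    have h1 : μH[(n:ℝ)] K ≤ (L.toNNReal : ℝ≥0∞) ^ (n:ℝ) * μH[(n:ℝ)] E := by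
      have := hψlip.hausdorffMeasure_image_le hd0
      rwa [hKE] at this
    set Sset : Set (EuclideanSpace ℝ (Fin n)) :=
      {z | ‖z‖ ≤ L * t ∧ |⟪w, z⟫| ≤ ε * t} with hSdef
    have h2 : E ⊆ Sset := by
      rintro _ ⟨x, hx, rfl⟩
      have hxt : ‖x‖ ≤ t := by rwa [hKdef, mem_closedBall_zero_iff] at hx
      constructor
      · calc ‖φ x‖ ≤ L * ‖x‖ := hφL x (hKball hx)
          _ ≤ L * t := mul_le_mul_of_nonneg_left hxt hL0.le
      · exact hsm x hxt
    set bb : Fin n → ℝ := fun i => if i = i₀ then ε * t else L * t with hbbdef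
    set Box : Set (EuclideanSpace ℝ (Fin n)) := {z | ∀ i, |z i| ≤ bb i} with hBoxdef
    have h4 : (⇑R) '' Sset ⊆ Box := by
      rintro _ ⟨z, ⟨hz1, hz2⟩, rfl⟩
      intro i
      by_cases hii : i = i₀
      · have hbbi : bb i = ε * t := by simp only [hbbdef]; rw [if_pos hii]
        rw [hbbi, hii]
        have h12 : (R z) i₀ = ⟪e₀, R z⟫ := by
          rw [he₀def, EuclideanSpace.inner_single_left]
          simp
        rw [h12, ← hRw, R.inner_map_map]
        exact hz2
      · have hbbi : bb i = L * t := by simp only [hbbdef]; rw [if_neg hii]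
        rw [hbbi]
        calc |(R z) i| ≤ ‖R z‖ := coord_le_norm _ _
          _ = ‖z‖ := R.norm_map z
          _ ≤ L * t := hz1
    have h3 : μH[(n:ℝ)] Sset ≤ μH[(n:ℝ)] Box := by
      have him : μH[(n:ℝ)] (R.toIsometryEquiv '' Sset) = μH[(n:ℝ)] Sset :=
        R.toIsometryEquiv.hausdorffMeasure_image _ _
      rw [← him]
      apply measure_mono
      simpa using h4
    -- push Box to the pi space
    set BoxPi : Set (Fin n → ℝ) := Set.pi Set.univ (fun i => Set.Icc (-(bb i)) (bb i))
      with hBoxPidef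
    have h5 : μH[(n:ℝ)] Box ≤ (c₁ : ℝ≥0∞) ^ (n:ℝ) * μH[(n:ℝ)] (eqv '' Box) :=
      hanti.le_hausdorffMeasure_image hd0 _
    have h6 : eqv '' Box ⊆ BoxPi := by
      rintro _ ⟨z, hz, rfl⟩
      intro i _
      have := hz i
      rw [abs_le] at this
      exact ⟨this.1, this.2⟩
    have hBoxPivol : volume BoxPi = ENNReal.ofReal (2 * (ε * t)) *
        ENNReal.ofReal (2 * (L * t)) ^ (n - 1) := by
      rw [hBoxPidef, volume_pi_pi]
      have hone : ∀ i, volume (Set.Icc (-(bb i)) (bb i)) = ENNReal.ofReal (2 * bb i) := by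
        intro i
        rw [Real.volume_Icc]
        congr 1
        ring
      simp only [hone]
      rw [← Finset.mul_prod_erase Finset.univ _ (Finset.mem_univ i₀)]
      have hbb0 : bb i₀ = ε * t := by rw [hbbdef]; simp
      have hrest : ∀ i ∈ Finset.univ.erase i₀, ENNReal.ofReal (2 * bb i)
          = ENNReal.ofReal (2 * (L * t)) := by
        intro i hi
        have : i ≠ i₀ := (Finset.mem_erase.1 hi).1
        rw [hbbdef]
        simp [this]
      rw [Finset.prod_congr rfl hrest, Finset.prod_const, hbb0]
      congr 2
      rw [Finset.card_erase_of_mem (Finset.mem_univ i₀), Finset.card_univ, Fintype.card_fin]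
    have h7 : μH[(n:ℝ)] (eqv '' Box) ≤ ENNReal.ofReal (2 * (ε * t)) *
        ENNReal.ofReal (2 * (L * t)) ^ (n - 1) := by
      rw [← hBoxPivol, ← hpi]
      exact measure_mono h6
    -- assemble
    have hchain : ENNReal.ofReal ((2 * s) ^ n) ≤
        (L.toNNReal : ℝ≥0∞) ^ (n:ℝ) * ((c₁ : ℝ≥0∞) ^ (n:ℝ) *
          (ENNReal.ofReal (2 * (ε * t)) * ENNReal.ofReal (2 * (L * t)) ^ (n - 1))) := by
      calc ENNReal.ofReal ((2 * s) ^ n) ≤ μH[(n:ℝ)] K := hlow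
        _ ≤ (L.toNNReal : ℝ≥0∞) ^ (n:ℝ) * μH[(n:ℝ)] E := h1
        _ ≤ (L.toNNReal : ℝ≥0∞) ^ (n:ℝ) * ((c₁ : ℝ≥0∞) ^ (n:ℝ)
              * (ENNReal.ofReal (2 * (ε * t)) * ENNReal.ofReal (2 * (L * t)) ^ (n - 1))) := by
            apply mul_le_mul_right _ _
            calc μH[(n:ℝ)] E ≤ μH[(n:ℝ)] Sset := measure_mono h2
              _ ≤ μH[(n:ℝ)] Box := h3
              _ ≤ (c₁ : ℝ≥0∞) ^ (n:ℝ) * μH[(n:ℝ)] (eqv '' Box) := h5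
              _ ≤ (c₁ : ℝ≥0∞) ^ (n:ℝ)
                  * (ENNReal.ofReal (2 * (ε * t)) * ENNReal.ofReal (2 * (L * t)) ^ (n - 1)) :=
                mul_le_mul_right h7 _
    -- convert to a real inequality
    rw [ENNReal.rpow_natCast, ENNReal.rpow_natCast] at hchain
    have hne : (L.toNNReal : ℝ≥0∞) ^ n * ((c₁ : ℝ≥0∞) ^ n *
        (ENNReal.ofReal (2 * (ε * t)) * ENNReal.ofReal (2 * (L * t)) ^ (n - 1))) ≠ ⊤ := by
      apply ENNReal.mul_ne_top
      · exact ENNReal.pow_ne_top ENNReal.coe_ne_top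
      apply ENNReal.mul_ne_top
      · exact ENNReal.pow_ne_top ENNReal.coe_ne_top
      apply ENNReal.mul_ne_top ENNReal.ofReal_ne_top
      exact ENNReal.pow_ne_top ENNReal.ofReal_ne_top
    have hreal := ENNReal.toReal_mono hne hchain
    rw [ENNReal.toReal_ofReal (by positivity)] at hreal
    rw [ENNReal.toReal_mul, ENNReal.toReal_mul, ENNReal.toReal_mul, ENNReal.toReal_pow,
      ENNReal.toReal_pow, ENNReal.toReal_pow, ENNReal.coe_toReal, ENNReal.coe_toReal,
      Real.coe_toNNReal _ hL0.le, ENNReal.toReal_ofReal (by positivity),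
      ENNReal.toReal_ofReal (by positivity)] at hreal
    -- now pure real algebra
    have hn1 : n - 1 + 1 = n := Nat.succ_pred_eq_of_pos hnpos
    have hsplit : t ^ n = t ^ (n - 1) * t := by
      conv_lhs => rw [← hn1]
      rw [pow_succ]
    have hexp_l : (2 * s) ^ n = (2 / ((c₁ : ℝ) + 1)) ^ n * t ^ n := by
      rw [← mul_pow]
      congr 1
      rw [hsdef]
      field_simp
    have hexp_r : L ^ n * ((c₁ : ℝ) ^ n * ((2 * (ε * t)) * (2 * (L * t)) ^ (n - 1)))
        = (L ^ n * (c₁ : ℝ) ^ n * 2 * (2 * L) ^ (n - 1)) * ε * t ^ n := by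
      have h13 : (2 * (L * t)) = (2 * L) * t := by ring
      rw [h13, mul_pow, hsplit]
      ring
    rw [hexp_l, hexp_r] at hreal
    exact le_of_mul_le_mul_right hreal (by positivity)
  exact final_contra _ _ (by positivity) (by positivity) main



private lemma nonpos_of_le_all (c M : ℝ) (h : ∀ ε : ℝ, 0 < ε → c ≤ ε * M) : c ≤ 0 := by
  rcases le_or_gt M 0 with hM | hM
  · have := h 1 one_pos
    nlinarith
  · by_contra hc
    push_neg at hc
    have h1 := h (c / (2 * M)) (by positivity)
    have h2 : c / (2 * M) * M = c / 2 := by field_simp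
    rw [h2] at h1
    linarith

/-- The rank of the derivative at 0 is invariant under bi-Lipschitz right equivalence. -/
theorem rank_biLipschitz_invariant (n p : ℕ)
    (f g : EuclideanSpace ℝ (Fin n) → EuclideanSpace ℝ (Fin p))
    (hf0 : f 0 = 0) (hg0 : g 0 = 0)
    (hfd : DifferentiableAt ℝ f 0) (hgd : DifferentiableAt ℝ g 0)
    (r L : ℝ) (hr : 0 < r) (hL : 1 ≤ L)
    (φ : EuclideanSpace ℝ (Fin n) → EuclideanSpace ℝ (Fin n))
    (hφ0 : φ 0 = 0)
    (hbl : ∀ x ∈ ball (0 : EuclideanSpace ℝ (Fin n)) r,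
      ∀ y ∈ ball (0 : EuclideanSpace ℝ (Fin n)) r,
        (1 / L) * ‖x - y‖ ≤ ‖φ x - φ y‖ ∧ ‖φ x - φ y‖ ≤ L * ‖x - y‖)
    (heq : ∀ x ∈ ball (0 : EuclideanSpace ℝ (Fin n)) r, f (φ x) = g x) :
    Module.finrank ℝ (LinearMap.range (fderiv ℝ f 0 : EuclideanSpace ℝ (Fin n) →ₗ[ℝ] EuclideanSpace ℝ (Fin p))) =
      Module.finrank ℝ (LinearMap.range (fderiv ℝ g 0 : EuclideanSpace ℝ (Fin n) →ₗ[ℝ] EuclideanSpace ℝ (Fin p))) := by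
  have hL0 : (0:ℝ) < L := lt_of_lt_of_le one_pos hL
  set A := fderiv ℝ f 0 with hA
  set B := fderiv ℝ g 0 with hB
  set V : Submodule ℝ (EuclideanSpace ℝ (Fin p)) := LinearMap.range (A : EuclideanSpace ℝ (Fin n) →ₗ[ℝ] EuclideanSpace ℝ (Fin p)) with hV
  set W : Submodule ℝ (EuclideanSpace ℝ (Fin p)) := LinearMap.range (B : EuclideanSpace ℝ (Fin n) →ₗ[ℝ] EuclideanSpace ℝ (Fin p)) with hW
  suffices h : V = W by rw [h]
  have haux := aux_small f g hf0 hg0 hfd hgd r L hr hL φ hφ0 hbl heq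
  -- from orthogonality to the range of B, inner products with B vanish
  have hmemW : ∀ u : EuclideanSpace ℝ (Fin p), (∀ x, ⟪u, B x⟫ = 0) ↔ u ∈ Wᗮ := by
    intro u
    constructor
    · intro h
      rw [Submodule.mem_orthogonal']
      rintro _ ⟨x, rfl⟩
      exact h x
    · intro h x
      exact (Submodule.mem_orthogonal' W u).1 h (B x) (LinearMap.mem_range.2 ⟨x, rfl⟩)
  have hmemV : ∀ u : EuclideanSpace ℝ (Fin p), (∀ x, ⟪u, A x⟫ = 0) ↔ u ∈ Vᗮ := by
    intro u
    constructor
    · intro h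
      rw [Submodule.mem_orthogonal']
      rintro _ ⟨x, rfl⟩
      exact h x
    · intro h x
      exact (Submodule.mem_orthogonal' V u).1 h (A x) (LinearMap.mem_range.2 ⟨x, rfl⟩)
  -- easy direction
  have claim1 : Vᗮ ≤ Wᗮ := by
    intro u hu
    have huA : ∀ z, ⟪u, A z⟫ = 0 := (hmemV u).2 hu
    rw [← hmemW u]
    intro x
    rcases eq_or_ne x 0 with rfl | hx0
    · simp
    have hx0' : (0:ℝ) < ‖x‖ := norm_pos_iff.2 hx0
    have hsc : ∀ ε : ℝ, 0 < ε → |⟪u, B x⟫| ≤ ε * ‖x‖ := by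
      intro ε hε
      obtain ⟨t, ht0, htr, hest⟩ := haux u ε hε
      set x' : EuclideanSpace ℝ (Fin n) := (t / ‖x‖) • x with hx'
      have hxn : ‖x'‖ = t := by
        rw [hx', norm_smul]
        rw [Real.norm_eq_abs, abs_of_pos (div_pos ht0 hx0')]
        field_simp
      have h1 := hest x' (le_of_eq hxn)
      rw [huA (φ x')] at h1
      have h2 : ⟪u, B x'⟫ = (t / ‖x‖) * ⟪u, B x⟫ := by
        rw [hx', ContinuousLinearMap.map_smul]
        exact real_inner_smul_right _ _ _
      rw [h2] at h1
      rw [zero_sub, abs_neg, abs_mul, abs_of_pos (div_pos ht0 hx0'), hxn] at h1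
      have h3 : (t / ‖x‖) * |⟪u, B x⟫| ≤ ε * t := h1
      rw [div_mul_eq_mul_div, div_le_iff₀ hx0'] at h3
      have h5 : ε * t * ‖x‖ = t * (ε * ‖x‖) := by ring
      rw [h5] at h3
      exact le_of_mul_le_mul_left h3 ht0
    have := nonpos_of_le_all |⟪u, B x⟫| ‖x‖ hsc
    have habs : (0:ℝ) ≤ |⟪u, B x⟫| := abs_nonneg _
    have : |⟪u, B x⟫| = 0 := le_antisymm this habs
    exact abs_eq_zero.1 this
  -- hard direction
  have claim2 : Wᗮ ≤ Vᗮ := by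
    intro u hu
    have huB : ∀ x, ⟪u, B x⟫ = 0 := (hmemW u).2 hu
    rw [← hmemV u]
    by_contra hcon
    push_neg at hcon
    obtain ⟨z₀, hz₀⟩ := hcon
    set w' : EuclideanSpace ℝ (Fin n) := (ContinuousLinearMap.adjoint A) u with hw'def
    have hw' : ∀ z, ⟪w', z⟫ = ⟪u, A z⟫ := fun z =>
      ContinuousLinearMap.adjoint_inner_left A z u
    have hwne : w' ≠ 0 := by
      intro hcontra
      apply hz₀
      rw [← hw' z₀, hcontra, inner_zero_left]
    set wh : EuclideanSpace ℝ (Fin n) := ‖w'‖⁻¹ • w' with hwhdef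
    have hwh : ‖wh‖ = 1 := norm_smul_inv_norm hwne
    have hwn0 : (0:ℝ) < ‖w'‖ := norm_pos_iff.2 hwne
    have hsmall : ∀ ε > 0, ∃ t, 0 < t ∧ t < r ∧
        ∀ x : EuclideanSpace ℝ (Fin n), ‖x‖ ≤ t → |⟪wh, φ x⟫| ≤ ε * t := by
      intro ε hε
      obtain ⟨t, ht0, htr, hest⟩ := haux u (ε * ‖w'‖) (by positivity)
      refine ⟨t, ht0, htr, ?_⟩
      intro x hx
      have h1 := hest x hx
      rw [huB x, sub_zero] at h1
      have h2 : ⟪wh, φ x⟫ = ‖w'‖⁻¹ * ⟪u, A (φ x)⟫ := by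
        rw [hwhdef, real_inner_smul_left, hw']
      rw [h2, abs_mul, abs_of_pos (inv_pos.2 hwn0)]
      have h3 : |⟪u, A (φ x)⟫| ≤ ε * ‖w'‖ * t :=
        h1.trans (mul_le_mul_of_nonneg_left hx (by positivity))
      calc ‖w'‖⁻¹ * |⟪u, A (φ x)⟫| ≤ ‖w'‖⁻¹ * (ε * ‖w'‖ * t) :=
            mul_le_mul_of_nonneg_left h3 (inv_pos.2 hwn0).le
        _ = ε * t := by field_simp
    exact absurd (key wh hwh r L hr hL φ hφ0 hbl hsmall) id
  have horth : Vᗮ = Wᗮ := le_antisymm claim1 claim2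
  calc V = Vᗮᗮ := (Submodule.orthogonal_orthogonal V).symm
    _ = Wᗮᗮ := by rw [horth]
    _ = W := Submodule.orthogonal_orthogonal W
end

section
/- Fix an integer p ≥ 0 and λ ∈ ℂ with 1 + 2λ³ ≠ 0 and 1 − 2λ³ ≠ 0. Define ξ : ℂ × ℂ × ℂ^p → ℂ by ξ(u,v,w) = u³ − 3λ²uv⁴ + v⁶ + w_1² + ⋯ + w_p². Fix δ > 1 and σ > 0 and let Ω = { x = (u,v,w) : ξ(x) ≠ 0, δ^{-1}‖x‖·‖Dξ(x)‖ ≤ |ξ(x)| ≤ δ‖x‖·‖Dξ(x)‖, and |ξ(x)| ≤ σ‖x‖⁶ }. If (x_m) is a sequence of points of Ω with x_m → 0 and x_m ≠ 0 such that the unit vectors x_m/‖x_m‖ converge to a vector μ = (a, b, c) ∈ ℂ × ℂ × ℂ^p, then a = 0 and c = 0. -/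
open Metric Filter

/-- `ξ(u,v,w) = u³ − 3λ²uv⁴ + v⁶ + w₁² + ⋯ + w_p²` on `ℂ^{2+p}`, where `u = x 0`,
`v = x 1` and `w j = x (j+2)`. -/
noncomputable def xiJ10 (p : ℕ) (lam : ℂ) (x : EuclideanSpace ℂ (Fin (p + 2))) : ℂ :=
  (x 0) ^ 3 - 3 * lam ^ 2 * (x 0) * (x 1) ^ 4 + (x 1) ^ 6 +
    ∑ j : Fin p, (x j.succ.succ) ^ 2

/-- The region `Ω = V^δ(ξ) ∩ W^σ(ξ,6)`. -/
noncomputable def omegaJ10 (p : ℕ) (lam : ℂ) (δ σ : ℝ) :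
    Set (EuclideanSpace ℂ (Fin (p + 2))) :=
  {x | xiJ10 p lam x ≠ 0 ∧
    δ⁻¹ * (‖x‖ * ‖fderiv ℂ (xiJ10 p lam) x‖) ≤ ‖xiJ10 p lam x‖ ∧
    ‖xiJ10 p lam x‖ ≤ δ * (‖x‖ * ‖fderiv ℂ (xiJ10 p lam) x‖) ∧
    ‖xiJ10 p lam x‖ ≤ σ * ‖x‖ ^ 6}

section Aux

variable {p : ℕ} {lam : ℂ}

lemma diffAt_coordJ10 (i : Fin (p+2)) (x : EuclideanSpace ℂ (Fin (p+2))) :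
    DifferentiableAt ℂ (fun y : EuclideanSpace ℂ (Fin (p+2)) => y i) x := by
  show DifferentiableAt ℂ (⇑(EuclideanSpace.proj (𝕜:=ℂ) i)) x
  exact (EuclideanSpace.proj (𝕜:=ℂ) i).differentiableAt

lemma xiJ10_diffAt (x : EuclideanSpace ℂ (Fin (p+2))) :
    DifferentiableAt ℂ (xiJ10 p lam) x := by
  have hc : ∀ i : Fin (p+2), DifferentiableAt ℂ
      (fun y : EuclideanSpace ℂ (Fin (p+2)) => y i) x := fun i => diffAt_coordJ10 i x
  unfold xiJ10
  exact ((((hc 0).pow 3).sub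
    (((differentiableAt_const _).mul (hc 0)).mul ((hc 1).pow 4))).add ((hc 1).pow 6)).add
    (DifferentiableAt.fun_sum fun j _ => (hc j.succ.succ).pow 2)

lemma fderiv_single_eqJ10 (x : EuclideanSpace ℂ (Fin (p+2))) (i : Fin (p+2)) (D : ℂ)
    (h : HasDerivAt (fun t : ℂ => xiJ10 p lam (x + t • EuclideanSpace.single i (1:ℂ))) D 0) :
    fderiv ℂ (xiJ10 p lam) x (EuclideanSpace.single i (1:ℂ)) = D := by
  have hd := (xiJ10_diffAt (lam := lam) x).hasFDerivAt
  have hc : HasDerivAt (fun t : ℂ => x + t • EuclideanSpace.single i (1:ℂ))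
      (EuclideanSpace.single i (1:ℂ)) 0 := by
    simpa using ((hasDerivAt_id (0:ℂ)).smul_const (EuclideanSpace.single i (1:ℂ))).const_add x
  have hc0 : x + (0:ℂ) • EuclideanSpace.single i (1:ℂ) = x := by simp
  have hd' : HasFDerivAt (xiJ10 p lam) (fderiv ℂ (xiJ10 p lam) x)
      (x + (0:ℂ) • EuclideanSpace.single i (1:ℂ)) := by rw [hc0]; exact hd
  have h2 : HasDerivAt (fun t : ℂ => xiJ10 p lam (x + t • EuclideanSpace.single i (1:ℂ)))
      (fderiv ℂ (xiJ10 p lam) x (EuclideanSpace.single i (1:ℂ))) 0 :=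
    by have := hd'.comp_hasDerivAt 0 hc; exact this
  exact h2.unique h

lemma fderiv_uJ10 (x : EuclideanSpace ℂ (Fin (p+2))) :
    fderiv ℂ (xiJ10 p lam) x (EuclideanSpace.single (0 : Fin (p+2)) (1:ℂ))
      = 3 * (x 0) ^ 2 - 3 * lam ^ 2 * (x 1) ^ 4 := by
  apply fderiv_single_eqJ10
  have hform : (fun t : ℂ => xiJ10 p lam (x + t • EuclideanSpace.single (0 : Fin (p+2)) (1:ℂ)))
      = fun t : ℂ => ((x 0 + t) ^ 3 - 3 * lam ^ 2 * (x 0 + t) * (x 1) ^ 4 + (x 1) ^ 6)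
          + ∑ k : Fin p, (x k.succ.succ) ^ 2 := by
    funext t
    simp only [xiJ10, PiLp.add_apply, PiLp.smul_apply, smul_eq_mul,
      EuclideanSpace.single_apply]
    rw [if_neg (by simp [Fin.ext_iff] : ¬ ((1 : Fin (p+2)) = 0))]
    have hs : ∀ k : Fin p, ((k.succ.succ : Fin (p+2)) = 0) = False := by
      intro k; simp [Fin.succ_ne_zero]
    simp only [hs, if_false, if_pos rfl, if_true, mul_one, mul_zero, add_zero]
  rw [hform]
  have h0 : HasDerivAt (fun t : ℂ => x 0 + t) 1 0 := (hasDerivAt_id 0).const_add (x 0)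
  have hA := h0.fun_pow 3
  have hB := (h0.const_mul (3 * lam ^ 2)).mul_const ((x 1) ^ 4)
  have hfull := (((hA.sub hB).add_const ((x 1) ^ 6)).add_const
    (∑ k : Fin p, (x k.succ.succ) ^ 2))
  refine hfull.congr_deriv ?_
  push_cast
  ring

lemma fderiv_wJ10 (x : EuclideanSpace ℂ (Fin (p+2))) (j : Fin p) :
    fderiv ℂ (xiJ10 p lam) x (EuclideanSpace.single (j.succ.succ : Fin (p+2)) (1:ℂ))
      = 2 * x j.succ.succ := by
  apply fderiv_single_eqJ10
  have hform : (fun t : ℂ =>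
        xiJ10 p lam (x + t • EuclideanSpace.single (j.succ.succ : Fin (p+2)) (1:ℂ)))
      = fun t : ℂ => ((x 0) ^ 3 - 3 * lam ^ 2 * (x 0) * (x 1) ^ 4 + (x 1) ^ 6)
          + ∑ k : Fin p, (x k.succ.succ + t * (if k = j then 1 else 0)) ^ 2 := by
    funext t
    simp only [xiJ10, PiLp.add_apply, PiLp.smul_apply, smul_eq_mul,
      EuclideanSpace.single_apply]
    rw [if_neg (Ne.symm (Fin.succ_ne_zero _)), if_neg (Ne.symm (Fin.succ_succ_ne_one _))]
    simp only [Fin.succ_inj, mul_zero, add_zero]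
  rw [hform]
  have hsum : HasDerivAt
      (fun t : ℂ => ∑ k : Fin p, (x k.succ.succ + t * (if k = j then 1 else 0)) ^ 2)
      (∑ k : Fin p, (if k = j then 2 * x k.succ.succ else 0)) 0 := by
    apply HasDerivAt.fun_sum
    intro k _
    by_cases hk : k = j
    · subst hk
      simp only [if_pos rfl, if_true]
      have h0 : HasDerivAt (fun t : ℂ => x k.succ.succ + t * 1) 1 0 := by
        simpa using ((hasDerivAt_id (0:ℂ)).const_add (x k.succ.succ))
      have := h0.fun_pow 2
      refine this.congr_deriv ?_
      push_cast
      ring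
    · simp only [if_neg hk, mul_zero, add_zero]
      exact hasDerivAt_const _ _
  have hfull := hsum.const_add ((x 0) ^ 3 - 3 * lam ^ 2 * (x 0) * (x 1) ^ 4 + (x 1) ^ 6)
  refine hfull.congr_deriv ?_
  simp [Finset.sum_ite_eq']

end Aux

/-- The tangent cone at `0` of `Ω` is contained in the `v`-axis. -/
theorem tangent_cone_omega_subset_v_axis (p : ℕ) (lam : ℂ)
    (h₁ : 1 + 2 * lam ^ 3 ≠ 0) (h₂ : 1 - 2 * lam ^ 3 ≠ 0)
    (δ σ : ℝ) (hδ : 1 < δ) (hσ : 0 < σ)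
    (x : ℕ → EuclideanSpace ℂ (Fin (p + 2)))
    (hxΩ : ∀ m, x m ∈ omegaJ10 p lam δ σ)
    (hxne : ∀ m, x m ≠ 0)
    (hx0 : Tendsto x atTop (nhds 0))
    (μ : EuclideanSpace ℂ (Fin (p + 2)))
    (hμ : Tendsto (fun m => (‖x m‖)⁻¹ • x m) atTop (nhds μ)) :
    μ 0 = 0 ∧ ∀ j : Fin p, μ j.succ.succ = 0 := by
  have hδ0 : (0:ℝ) < δ := lt_trans one_pos hδ
  have ht' : ∀ m, (0:ℝ) < ‖x m‖ := fun m => norm_pos_iff.mpr (hxne m)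
  -- key bound for directional derivatives
  have key : ∀ (i : Fin (p+2)) (m : ℕ),
      ‖fderiv ℂ (xiJ10 p lam) (x m) (EuclideanSpace.single i (1:ℂ))‖
        ≤ δ * σ * ‖x m‖ ^ 5 := by
    intro i m
    obtain ⟨-, hlow, -, hupp⟩ := hxΩ m
    have hle : ‖fderiv ℂ (xiJ10 p lam) (x m) (EuclideanSpace.single i (1:ℂ))‖
        ≤ ‖fderiv ℂ (xiJ10 p lam) (x m)‖ := by
      have := (fderiv ℂ (xiJ10 p lam) (x m)).le_opNorm (EuclideanSpace.single i (1:ℂ))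
      simpa [EuclideanSpace.norm_single] using this
    have h1 : ‖x m‖ * ‖fderiv ℂ (xiJ10 p lam) (x m)‖ ≤ δ * (σ * ‖x m‖ ^ 6) := by
      have h2 : δ⁻¹ * (‖x m‖ * ‖fderiv ℂ (xiJ10 p lam) (x m)‖) ≤ σ * ‖x m‖ ^ 6 :=
        hlow.trans hupp
      have h3 := mul_le_mul_of_nonneg_left h2 hδ0.le
      calc ‖x m‖ * ‖fderiv ℂ (xiJ10 p lam) (x m)‖
          = δ * (δ⁻¹ * (‖x m‖ * ‖fderiv ℂ (xiJ10 p lam) (x m)‖)) := by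
            field_simp
        _ ≤ δ * (σ * ‖x m‖ ^ 6) := h3
    have h4 : ‖x m‖ * ‖fderiv ℂ (xiJ10 p lam) (x m) (EuclideanSpace.single i (1:ℂ))‖
        ≤ ‖x m‖ * (δ * σ * ‖x m‖ ^ 5) := by
      calc ‖x m‖ * ‖fderiv ℂ (xiJ10 p lam) (x m) (EuclideanSpace.single i (1:ℂ))‖
          ≤ ‖x m‖ * ‖fderiv ℂ (xiJ10 p lam) (x m)‖ :=
            mul_le_mul_of_nonneg_left hle (ht' m).le
        _ ≤ δ * (σ * ‖x m‖ ^ 6) := h1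
        _ = ‖x m‖ * (δ * σ * ‖x m‖ ^ 5) := by ring
    exact le_of_mul_le_mul_left h4 (ht' m)
  have htnorm : Tendsto (fun m => ‖x m‖) atTop (nhds 0) := by
    simpa using hx0.norm
  have hcoord : ∀ i : Fin (p+2),
      Tendsto (fun m => ((‖x m‖)⁻¹ • x m) i) atTop (nhds (μ i)) := by
    intro i
    exact ((EuclideanSpace.proj (𝕜:=ℂ) i).continuous.tendsto μ).comp hμ
  constructor
  · -- u-component
    set f : ℕ → ℂ := fun m =>
      3 * (((‖x m‖)⁻¹ • x m) 0) ^ 2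
        - 3 * lam ^ 2 * ((‖x m‖ : ℂ)) ^ 2 * (((‖x m‖)⁻¹ • x m) 1) ^ 4 with hf
    have hlim1 : Tendsto f atTop (nhds (3 * (μ 0) ^ 2)) := by
      have hC : Tendsto (fun m => ((‖x m‖ : ℝ) : ℂ)) atTop (nhds 0) := by
        have := (Complex.continuous_ofReal.tendsto 0).comp htnorm
        exact this
      have : Tendsto f atTop
          (nhds (3 * (μ 0) ^ 2 - 3 * lam ^ 2 * (0:ℂ) ^ 2 * (μ 1) ^ 4)) := by
        exact ((tendsto_const_nhds.mul ((hcoord 0).pow 2)).sub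
          (((tendsto_const_nhds.mul (hC.pow 2))).mul ((hcoord 1).pow 4)))
      simpa using this
    have hbound : ∀ m, ‖f m‖ ≤ δ * σ * ‖x m‖ ^ 3 := by
      intro m
      have hk := key 0 m
      rw [fderiv_uJ10] at hk
      have htne : ((‖x m‖ : ℝ) : ℂ) ≠ 0 := by
        exact_mod_cast (ht' m).ne'
      have hfm : f m = (((‖x m‖ : ℝ) : ℂ))⁻¹ ^ 2
          * (3 * (x m 0) ^ 2 - 3 * lam ^ 2 * (x m 1) ^ 4) := by
        simp only [hf, PiLp.smul_apply, Complex.real_smul, Complex.ofReal_inv]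
        field_simp
      rw [hfm]
      rw [norm_mul, norm_pow, norm_inv]
      have hnr : ‖((‖x m‖ : ℝ) : ℂ)‖ = ‖x m‖ := by
        simp [Complex.norm_real, abs_of_pos (ht' m)]
      rw [hnr]
      calc (‖x m‖)⁻¹ ^ 2 * ‖3 * (x m 0) ^ 2 - 3 * lam ^ 2 * (x m 1) ^ 4‖
          ≤ (‖x m‖)⁻¹ ^ 2 * (δ * σ * ‖x m‖ ^ 5) := by
            apply mul_le_mul_of_nonneg_left hk
            positivity
        _ = δ * σ * ‖x m‖ ^ 3 := by
            have hne : ‖x m‖ ≠ 0 := (ht' m).ne'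
            field_simp
    have hrhs : Tendsto (fun m => δ * σ * ‖x m‖ ^ 3) atTop (nhds 0) := by
      have := (htnorm.pow 3).const_mul (δ * σ)
      simpa using this
    have hf0 : Tendsto f atTop (nhds 0) := squeeze_zero_norm hbound hrhs
    have h30 : 3 * (μ 0) ^ 2 = 0 := tendsto_nhds_unique hlim1 hf0
    rcases mul_eq_zero.mp h30 with h | h
    · norm_num at h
    · exact pow_eq_zero_iff (by norm_num) |>.mp h
  · -- w-components
    intro j
    have hbound : ∀ m, ‖((‖x m‖)⁻¹ • x m) j.succ.succ‖ ≤ δ * σ / 2 * ‖x m‖ ^ 4 := by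
      intro m
      have hk := key j.succ.succ m
      rw [fderiv_wJ10] at hk
      rw [norm_mul] at hk
      have h2 : ‖(2:ℂ)‖ = 2 := by simp
      rw [h2] at hk
      have hxj : ‖x m j.succ.succ‖ ≤ δ * σ / 2 * ‖x m‖ ^ 5 := by linarith
      have : ‖((‖x m‖)⁻¹ • x m) j.succ.succ‖ = (‖x m‖)⁻¹ * ‖x m j.succ.succ‖ := by
        simp only [PiLp.smul_apply, norm_smul, Real.norm_eq_abs,
          abs_of_pos (inv_pos.mpr (ht' m))]
      rw [this]
      calc (‖x m‖)⁻¹ * ‖x m j.succ.succ‖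
          ≤ (‖x m‖)⁻¹ * (δ * σ / 2 * ‖x m‖ ^ 5) := by
            apply mul_le_mul_of_nonneg_left hxj
            positivity
        _ = δ * σ / 2 * ‖x m‖ ^ 4 := by
            have hne : ‖x m‖ ≠ 0 := (ht' m).ne'
            field_simp
    have hrhs : Tendsto (fun m => δ * σ / 2 * ‖x m‖ ^ 4) atTop (nhds 0) := by
      have := (htnorm.pow 4).const_mul (δ * σ / 2)
      simpa using this
    have hf0 : Tendsto (fun m => ((‖x m‖)⁻¹ • x m) j.succ.succ) atTop (nhds 0) :=
      squeeze_zero_norm hbound hrhs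
    exact tendsto_nhds_unique (hcoord j.succ.succ) hf0
end

section
/- Let F : ℝ^n × ℝ → ℝ be continuously differentiable, and let X : ℝ^n × ℝ → ℝ^n be a continuous map for which there is a constant C > 0 with ‖X(x_1, t) − X(x_2, t)‖ ≤ C·‖x_1 − x_2‖ for all x_1, x_2 ∈ ℝ^n and all t ∈ ℝ. Suppose that ∂F/∂t(x,t) + Σ_{i=1}^n X_i(x,t)·∂F/∂x_i(x,t) = 0 for all (x,t) ∈ ℝ^n × ℝ. Then for every t ∈ ℝ there exists a bijection φ_t : ℝ^n → ℝ^n such that both φ_t and φ_t^{-1} are Lipschitz and F(φ_t(x), t) = F(x, 0) for all x ∈ ℝ^n. -/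
open Set

set_option linter.unusedSectionVars false
set_option maxHeartbeats 1000000

section ThomLevineAux

variable {E : Type*} [NormedAddCommGroup E] [NormedSpace ℝ E] [CompleteSpace E]

lemma tl_mono_Ici {f : ℝ → E} {c : E} {a b t : ℝ} (ht : t ∈ Ico a b)
    (h : HasDerivWithinAt f c (Icc a b) t) : HasDerivWithinAt f c (Ici t) t :=
  h.mono_of_mem_nhdsWithin <| Filter.mem_of_superset
    (Filter.inter_mem (mem_nhdsWithin_of_mem_nhds (Iio_mem_nhds ht.2)) self_mem_nhdsWithin)
    (fun _ hu => ⟨ht.1.trans hu.2, hu.1.le⟩)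

lemma tl_mono_Iic {f : ℝ → E} {c : E} {a b t : ℝ} (ht : t ∈ Ioc a b)
    (h : HasDerivWithinAt f c (Icc a b) t) : HasDerivWithinAt f c (Iic t) t :=
  h.mono_of_mem_nhdsWithin <| Filter.mem_of_superset
    (Filter.inter_mem (mem_nhdsWithin_of_mem_nhds (Ioi_mem_nhds ht.1)) self_mem_nhdsWithin)
    (fun _ hu => ⟨hu.1.le, hu.2.trans ht.2⟩)

lemma tl_sol (v : ℝ → E → E) (C : ℝ) (hC : 0 < C)
    (hlip : ∀ t x y, ‖v t x - v t y‖ ≤ C * ‖x - y‖)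
    (hvc : Continuous fun p : ℝ × E => v p.1 p.2)
    (a b t₀ : ℝ) (x₀ : E) (M₀ : ℝ) (hM₀ : 0 ≤ M₀)
    (hM : ∀ s ∈ Icc a b, ‖v s 0‖ ≤ M₀)
    (ht₀ : t₀ ∈ Icc a b) (hlen : b - a ≤ 1 / (M₀ + 3 * C)) :
    ∃ f : ℝ → E, f t₀ = x₀ ∧ ∀ s ∈ Icc a b, HasDerivWithinAt f (v s (f s)) (Icc a b) s := by
  have hlipW : ∀ t, LipschitzWith ⟨C, hC.le⟩ (v t) := fun t =>
    LipschitzWith.of_dist_le_mul fun x y => by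
      rw [dist_eq_norm, dist_eq_norm]; exact hlip t x y
  refine IsPicardLindelof.exists_eq_forall_mem_Icc_hasDerivWithinAt₀ (t₀ := ⟨t₀, ht₀⟩)
    (x₀ := x₀) (L := ⟨M₀ + C * (2 * ‖x₀‖ + 1), add_nonneg hM₀ (by positivity)⟩)
    (a := ⟨‖x₀‖ + 1, by positivity⟩) (K := ⟨C, hC.le⟩) ?_
  have hD : 0 < M₀ + 3 * C := by linarith
  constructor
  · exact fun t _ => (hlipW t).lipschitzOnWith
  · exact fun x _ => (hvc.comp (continuous_id.prodMk continuous_const)).continuousOn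
  · intro t ht x hx
    show ‖v t x‖ ≤ M₀ + C * (2 * ‖x₀‖ + 1)
    have h1 : ‖v t x - v t 0‖ ≤ C * ‖x - 0‖ := hlip t x 0
    rw [sub_zero] at h1
    have h2 : ‖x - x₀‖ ≤ ‖x₀‖ + 1 := mem_closedBall_iff_norm.mp hx
    have h3 : ‖x‖ ≤ ‖x - x₀‖ + ‖x₀‖ := by
      have := norm_add_le (x - x₀) x₀; simpa using this
    have h4 : ‖v t x‖ ≤ ‖v t x - v t 0‖ + ‖v t 0‖ := by
      have := norm_add_le (v t x - v t 0) (v t 0); simpa using this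
    have h5 := hM t ht
    nlinarith [norm_nonneg x]
  · show (M₀ + C * (2 * ‖x₀‖ + 1)) * max (b - t₀) (t₀ - a) ≤ ‖x₀‖ + 1 - 0
    rw [sub_zero]
    have hmax : max (b - t₀) (t₀ - a) ≤ b - a :=
      max_le (by linarith [ht₀.1]) (by linarith [ht₀.2])
    have hCb : 0 ≤ M₀ + C * (2 * ‖x₀‖ + 1) := by positivity
    calc (M₀ + C * (2 * ‖x₀‖ + 1)) * max (b - t₀) (t₀ - a)
        ≤ (M₀ + C * (2 * ‖x₀‖ + 1)) * (1 / (M₀ + 3 * C)) :=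
          mul_le_mul_of_nonneg_left (hmax.trans hlen) hCb
      _ ≤ ‖x₀‖ + 1 := by
          rw [mul_one_div, div_le_iff₀ hD]
          nlinarith [norm_nonneg x₀]


def TLGood (F : E × ℝ → ℝ) (a b : ℝ) : Prop :=
  ∃ φ ψ : E → E, (∀ x, ψ (φ x) = x) ∧ (∀ x, φ (ψ x) = x) ∧
    (∃ K : NNReal, LipschitzWith K φ) ∧ (∃ K : NNReal, LipschitzWith K ψ) ∧
    ∀ x, F (φ x, b) = F (x, a)

lemma tl_good_refl (F : E × ℝ → ℝ) (a : ℝ) : TLGood F a a :=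
  ⟨id, id, fun _ => rfl, fun _ => rfl, ⟨1, LipschitzWith.id⟩, ⟨1, LipschitzWith.id⟩,
    fun _ => rfl⟩

lemma tl_good_symm {F : E × ℝ → ℝ} {a b : ℝ} (h : TLGood F a b) : TLGood F b a := by
  obtain ⟨φ, ψ, h1, h2, h3, h4, h5⟩ := h
  exact ⟨ψ, φ, h2, h1, h4, h3, fun y => by
    have := h5 (ψ y); rw [h2 y] at this; exact this.symm⟩

lemma tl_good_trans {F : E × ℝ → ℝ} {a b c : ℝ} (h : TLGood F a b) (h' : TLGood F b c) :
    TLGood F a c := by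
  obtain ⟨φ₁, ψ₁, h1, h2, ⟨K₁, h3⟩, ⟨L₁, h4⟩, h5⟩ := h
  obtain ⟨φ₂, ψ₂, g1, g2, ⟨K₂, g3⟩, ⟨L₂, g4⟩, g5⟩ := h'
  refine ⟨φ₂ ∘ φ₁, ψ₁ ∘ ψ₂, fun x => ?_, fun y => ?_, ⟨K₂ * K₁, g3.comp h3⟩,
    ⟨L₁ * L₂, h4.comp g4⟩, fun x => ?_⟩
  · simp only [Function.comp]; rw [g1, h1]
  · simp only [Function.comp]; rw [h2, g2]
  · simp only [Function.comp]; rw [g5, h5]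


lemma tl_step (F : E × ℝ → ℝ) (hF : ContDiff ℝ 1 F)
    (v : ℝ → E → E) (C : ℝ) (hC : 0 < C)
    (hlip : ∀ t x y, ‖v t x - v t y‖ ≤ C * ‖x - y‖)
    (hvc : Continuous fun p : ℝ × E => v p.1 p.2)
    (hann : ∀ x t, fderiv ℝ F (x, t) (v t x, 1) = 0)
    (a b : ℝ) (hab : a ≤ b) (M₀ : ℝ) (hM₀ : 0 ≤ M₀)
    (hM : ∀ s ∈ Icc a b, ‖v s 0‖ ≤ M₀)
    (hlen : b - a ≤ 1 / (M₀ + 3 * C)) : TLGood F a b := by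
  have ha : a ∈ Icc a b := ⟨le_refl a, hab⟩
  have hb : b ∈ Icc a b := ⟨hab, le_refl b⟩
  have hlipW : ∀ t, LipschitzWith ⟨C, hC.le⟩ (v t) := fun t =>
    LipschitzWith.of_dist_le_mul fun x y => by
      rw [dist_eq_norm, dist_eq_norm]; exact hlip t x y
  choose f hf0 hfd using fun x : E => tl_sol v C hC hlip hvc a b a x M₀ hM₀ hM ha hlen
  choose g hg0 hgd using fun y : E => tl_sol v C hC hlip hvc a b b y M₀ hM₀ hM hb hlen
  have fcont : ∀ x, ContinuousOn (f x) (Icc a b) :=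
    fun x s hs => (hfd x s hs).continuousWithinAt
  have gcont : ∀ y, ContinuousOn (g y) (Icc a b) :=
    fun y s hs => (hgd y s hs).continuousWithinAt
  have fIci : ∀ x, ∀ s ∈ Ico a b, HasDerivWithinAt (f x) (v s (f x s)) (Ici s) s :=
    fun x s hs => tl_mono_Ici hs (hfd x s (Ico_subset_Icc_self hs))
  have gIci : ∀ y, ∀ s ∈ Ico a b, HasDerivWithinAt (g y) (v s (g y s)) (Ici s) s :=
    fun y s hs => tl_mono_Ici hs (hgd y s (Ico_subset_Icc_self hs))
  have fIic : ∀ x, ∀ s ∈ Ioc a b, HasDerivWithinAt (f x) (v s (f x s)) (Iic s) s :=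
    fun x s hs => tl_mono_Iic hs (hfd x s (Ioc_subset_Icc_self hs))
  have gIic : ∀ y, ∀ s ∈ Ioc a b, HasDerivWithinAt (g y) (v s (g y s)) (Iic s) s :=
    fun y s hs => tl_mono_Iic hs (hgd y s (Ioc_subset_Icc_self hs))
  refine ⟨fun x => f x b, fun y => g y a, ?_, ?_, ?_, ?_, ?_⟩
  · -- ψ ∘ φ = id
    intro x
    have heq : EqOn (f x) (g (f x b)) (Icc a b) :=
      ODE_solution_unique_of_mem_Icc_left (v := v) (s := fun _ => univ)
        (fun t _ => (hlipW t).lipschitzOnWith)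
        (fcont x) (fIic x) (fun _ _ => mem_univ _)
        (gcont (f x b)) (gIic (f x b)) (fun _ _ => mem_univ _)
        (by rw [hg0])
    have h2 := heq ha
    rw [hf0] at h2
    exact h2.symm
  · -- φ ∘ ψ = id
    intro y
    have heq : EqOn (f (g y a)) (g y) (Icc a b) :=
      ODE_solution_unique_of_mem_Icc_right (v := v) (s := fun _ => univ)
        (fun t _ => (hlipW t).lipschitzOnWith)
        (fcont (g y a)) (fIci (g y a)) (fun _ _ => mem_univ _)
        (gcont y) (gIci y) (fun _ _ => mem_univ _)
        (by rw [hf0])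
    have h2 := heq hb
    rw [hg0] at h2
    exact h2
  · -- φ Lipschitz
    refine ⟨(Real.exp (C * (b - a))).toNNReal, LipschitzWith.of_dist_le_mul fun x y => ?_⟩
    have := dist_le_of_trajectories_ODE (v := v) (δ := dist x y)
      (fun t => hlipW t) (fcont x) (fIci x) (fcont y) (fIci y)
      (le_of_eq (by rw [hf0, hf0])) b hb
    rw [Real.coe_toNNReal _ (Real.exp_nonneg _)]
    calc dist (f x b) (f y b) ≤ dist x y * Real.exp (↑(⟨C, hC.le⟩ : NNReal) * (b - a)) := this
      _ = Real.exp (C * (b - a)) * dist x y := by rw [mul_comm]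
  · -- ψ Lipschitz via time reversal
    have σmem : ∀ u ∈ Icc a b, a + b - u ∈ Icc a b := fun u hu =>
      ⟨by linarith [hu.2], by linarith [hu.1]⟩
    have gtd : ∀ y, ∀ s ∈ Icc a b, HasDerivWithinAt (fun u => g y (a + b - u))
        (-(v (a + b - s) (g y (a + b - s)))) (Icc a b) s := by
      intro y s hs
      have hσd : HasDerivWithinAt (fun u : ℝ => a + b - u) (-1) (Icc a b) s :=
        ((hasDerivAt_id s).const_sub (a + b)).hasDerivWithinAt
      have := (hgd y (a + b - s) (σmem s hs)).scomp s hσd (fun u hu => σmem u hu)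
      rw [neg_one_smul] at this; exact this
    have gtcont : ∀ y, ContinuousOn (fun u => g y (a + b - u)) (Icc a b) :=
      fun y s hs => (gtd y s hs).continuousWithinAt
    have wlipW : ∀ t : ℝ, LipschitzWith ⟨C, hC.le⟩ (fun z => -(v (a + b - t) z)) := fun t =>
      LipschitzWith.of_dist_le_mul fun x y => by
        rw [dist_eq_norm, dist_eq_norm]
        rw [neg_sub_neg, norm_sub_rev]
        exact hlip _ x y
    have gtIci : ∀ y, ∀ s ∈ Ico a b, HasDerivWithinAt (fun u => g y (a + b - u))
        (-(v (a + b - s) (g y (a + b - s)))) (Ici s) s :=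
      fun y s hs => tl_mono_Ici hs (gtd y s (Ico_subset_Icc_self hs))
    refine ⟨(Real.exp (C * (b - a))).toNNReal, LipschitzWith.of_dist_le_mul fun x y => ?_⟩
    have key := dist_le_of_trajectories_ODE
      (v := fun t z => -(v (a + b - t) z)) (δ := dist x y)
      (fun t => wlipW t)
      (gtcont x) (fun s hs => gtIci x s hs)
      (gtcont y) (fun s hs => gtIci y s hs)
      (le_of_eq (by norm_num [hg0])) b hb
    rw [Real.coe_toNNReal _ (Real.exp_nonneg _)]
    have hba : a + b - b = a := by ring
    rw [hba] at key
    calc dist (g x a) (g y a) ≤ dist x y * Real.exp (↑(⟨C, hC.le⟩ : NNReal) * (b - a)) := key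
      _ = Real.exp (C * (b - a)) * dist x y := by rw [mul_comm]
  · -- invariance of F
    intro x
    have hcont : ContinuousOn (fun u => F (f x u, u)) (Icc a b) :=
      hF.continuous.comp_continuousOn ((fcont x).prodMk continuousOn_id)
    have hderiv : ∀ s ∈ Ico a b, HasDerivWithinAt (fun u => F (f x u, u)) 0 (Ici s) s := by
      intro s hs
      have d1 : HasDerivWithinAt (fun u : ℝ => (f x u, u)) (v s (f x s), 1) (Ici s) s :=
        (fIci x s hs).prodMk (hasDerivWithinAt_id s _)
      have d2 := (hF.differentiable one_ne_zero (f x s, s)).hasFDerivAt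
      have d3 := HasFDerivAt.comp_hasDerivWithinAt (f := fun u : ℝ => (f x u, u)) s d2 d1
      rw [hann (f x s) s] at d3
      exact d3
    have hconst := constant_of_has_deriv_right_zero hcont hderiv b hb
    rw [hf0 x] at hconst
    exact hconst

lemma tl_good_all (F : E × ℝ → ℝ) (hF : ContDiff ℝ 1 F)
    (v : ℝ → E → E) (C : ℝ) (hC : 0 < C)
    (hlip : ∀ t x y, ‖v t x - v t y‖ ≤ C * ‖x - y‖)
    (hvc : Continuous fun p : ℝ × E => v p.1 p.2)
    (hann : ∀ x t, fderiv ℝ F (x, t) (v t x, 1) = 0)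
    (a b : ℝ) (hab : a ≤ b) : TLGood F a b := by
  obtain ⟨s₀, hs₀, hmax'⟩ := isCompact_Icc.exists_isMaxOn (nonempty_Icc.mpr hab)
    ((hvc.comp (continuous_id.prodMk continuous_const)).norm.continuousOn
      (s := Icc a b) : ContinuousOn (fun s : ℝ => ‖v s 0‖) (Icc a b))
  have hmax : ∀ s ∈ Icc a b, ‖v s 0‖ ≤ ‖v s₀ 0‖ := fun s hs => hmax' hs
  set M₀ := ‖v s₀ 0‖ with hM₀def
  have hM₀ : 0 ≤ M₀ := norm_nonneg _
  have hD : 0 < M₀ + 3 * C := by linarith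
  obtain ⟨N₀, hN₀⟩ := exists_nat_ge ((b - a) * (M₀ + 3 * C))
  set N : ℕ := N₀ + 1 with hNdef
  have hNpos : (0:ℝ) < (N : ℝ) := by positivity
  set d : ℝ := (b - a) / N with hddef
  have hd0 : 0 ≤ d := div_nonneg (by linarith) hNpos.le
  have hdD : d ≤ 1 / (M₀ + 3 * C) := by
    rw [hddef, div_le_div_iff₀ hNpos hD]
    have hle : (N₀ : ℝ) ≤ (N : ℝ) := by push_cast [hNdef]; linarith
    nlinarith
  have hNd : (N : ℝ) * d = b - a := by
    rw [hddef]; field_simp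
  have key : ∀ k : ℕ, k ≤ N → TLGood F a (a + k * d) := by
    intro k
    induction k with
    | zero => intro _; simpa using tl_good_refl F a
    | succ k ih =>
      intro hk
      have hk' : k ≤ N := Nat.le_of_succ_le hk
      have hkd : (k : ℝ) * d ≤ ((k : ℝ) + 1) * d := by nlinarith
      have hsub : a + ((k : ℝ) + 1) * d ≤ b := by
        have h1 : ((k : ℝ) + 1) ≤ (N : ℝ) := by exact_mod_cast hk
        nlinarith
      refine tl_good_trans (ih hk') ?_
      have hstep := tl_step F hF v C hC hlip hvc hann (a + k * d) (a + (k + 1 : ℕ) * d)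
        (by push_cast; linarith) M₀ hM₀ ?_ ?_
      · exact hstep
      · intro s hs
        apply hmax
        push_cast at hs
        constructor
        · have : (0:ℝ) ≤ (k:ℝ) * d := by positivity
          linarith [hs.1]
        · linarith [hs.2, hsub]
      · push_cast
        have : a + ((k:ℝ) + 1) * d - (a + (k:ℝ) * d) = d := by ring
        rw [this]
        exact hdD
  have hend := key N le_rfl
  rw [hNd] at hend
  have : a + (b - a) = b := by ring
  rwa [this] at hend

end ThomLevineAux

/-- The Thom–Levine criterion: a continuous vector field `∂/∂t + Σ Xᵢ ∂/∂xᵢ`,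
Lipschitz in `x`, annihilating `F`, yields bi-Lipschitz triviality of the
deformation `F`. -/
theorem thom_levine_biLipschitz_trivial (n : ℕ)
    (F : EuclideanSpace ℝ (Fin n) × ℝ → ℝ) (hF : ContDiff ℝ 1 F)
    (X : EuclideanSpace ℝ (Fin n) × ℝ → EuclideanSpace ℝ (Fin n))
    (hXc : Continuous X)
    (C : ℝ) (hC : 0 < C)
    (hXl : ∀ x₁ x₂ : EuclideanSpace ℝ (Fin n), ∀ t : ℝ,
      ‖X (x₁, t) - X (x₂, t)‖ ≤ C * ‖x₁ - x₂‖)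
    (hann : ∀ x : EuclideanSpace ℝ (Fin n), ∀ t : ℝ,
      fderiv ℝ F (x, t) (X (x, t), 1) = 0) :
    ∀ t : ℝ, ∃ φ ψ : EuclideanSpace ℝ (Fin n) → EuclideanSpace ℝ (Fin n),
      (∀ x, ψ (φ x) = x) ∧ (∀ x, φ (ψ x) = x) ∧
      (∃ K : NNReal, LipschitzWith K φ) ∧ (∃ K : NNReal, LipschitzWith K ψ) ∧
      ∀ x, F (φ x, t) = F (x, 0) := by
  intro t
  have hvc : Continuous fun p : ℝ × EuclideanSpace ℝ (Fin n) => X (p.2, p.1) :=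
    hXc.comp (continuous_snd.prodMk continuous_fst)
  have hgood : TLGood F 0 t := by
    rcases le_total 0 t with h | h
    · exact tl_good_all F hF (fun s x => X (x, s)) C hC (fun s x y => hXl x y s) hvc
        (fun x s => hann x s) 0 t h
    · exact tl_good_symm (tl_good_all F hF (fun s x => X (x, s)) C hC (fun s x y => hXl x y s)
        hvc (fun x s => hann x s) t 0 h)
  exact hgood
end

section
/- Let w_1, …, w_n and k be positive integers and define ρ_k : ℂ^n → ℝ by ρ_k(x) = |x_1|^{2k/w_1} + ⋯ + |x_n|^{2k/w_n}. Let T ⊂ ℂ be a nonempty compact set and let f : T × ℂ^n → ℂ be continuous such that for every t ∈ T: (i) f(t, s^{w_1}x_1, …, s^{w_n}x_n) = s^{2k}·f(t, x) for all real s > 0 and all x ∈ ℂ^n, and (ii) f(t, x) = 0 if and only if x = 0. Then there exist constants 0 < C_1 ≤ C_2, independent of t, such that C_1·ρ_k(x) ≤ |f(t, x)| ≤ C_2·ρ_k(x) for all t ∈ T and all x ∈ ℂ^n. -/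
/-- A continuous family of quasihomogeneous functions of type `(w₁,…,wₙ; 2k)` vanishing
only at the origin is comparable, uniformly over a compact parameter set, to the
standard control function `ρ_k(x) = Σᵢ |xᵢ|^{2k/wᵢ}`. -/
theorem quasihomogeneous_comparable_to_control (n : ℕ) (w : Fin n → ℕ)
    (hw : ∀ i, 0 < w i) (k : ℕ) (hk : 0 < k)
    (T : Set ℂ) (hTcompact : IsCompact T) (hTne : T.Nonempty)
    (f : ℂ → EuclideanSpace ℂ (Fin n) → ℂ)
    (hfc : ContinuousOn (fun q : ℂ × EuclideanSpace ℂ (Fin n) => f q.1 q.2)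
      (T ×ˢ (Set.univ : Set (EuclideanSpace ℂ (Fin n)))))
    (hquasi : ∀ t ∈ T, ∀ s : ℝ, 0 < s → ∀ x : EuclideanSpace ℂ (Fin n),
      f t (WithLp.toLp 2 (fun i => (s : ℂ) ^ (w i) * x i)) = (s : ℂ) ^ (2 * k) * f t x)
    (hzero : ∀ t ∈ T, ∀ x : EuclideanSpace ℂ (Fin n), f t x = 0 ↔ x = 0) :
    ∃ C₁ C₂ : ℝ, 0 < C₁ ∧ C₁ ≤ C₂ ∧ ∀ t ∈ T, ∀ x : EuclideanSpace ℂ (Fin n),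
      C₁ * (∑ i, ‖x i‖ ^ ((2 * k : ℝ) / (w i : ℝ))) ≤ ‖f t x‖ ∧
      ‖f t x‖ ≤ C₂ * (∑ i, ‖x i‖ ^ ((2 * k : ℝ) / (w i : ℝ))) := by
  classical
  rcases Nat.eq_zero_or_pos n with hn | hn
  · subst hn
    refine ⟨1, 1, one_pos, le_refl 1, fun t ht x => ?_⟩
    have hx : x = 0 := Subsingleton.elim x 0
    have hfx : f t x = 0 := (hzero t ht x).2 hx
    simp [hfx]
  -- exponents
  set p : Fin n → ℝ := fun i => (2 * k : ℝ) / (w i : ℝ) with hp_def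
  have hwne : ∀ i, (w i : ℝ) ≠ 0 := fun i => Nat.cast_ne_zero.2 (hw i).ne'
  have hp : ∀ i, 0 < p i := fun i => div_pos (by positivity) (by exact_mod_cast hw i)
  set ρ : EuclideanSpace ℂ (Fin n) → ℝ := fun x => ∑ i, ‖x i‖ ^ p i with hρ_def
  have hρ_cont : Continuous ρ := by
    apply continuous_finset_sum
    intro i _
    have h1 : Continuous fun a : ℝ => a ^ p i :=
      continuous_iff_continuousAt.2 fun a =>
        Real.continuousAt_rpow_const a (p i) (Or.inr (hp i).le)
    exact h1.comp (continuous_norm.comp (EuclideanSpace.proj i).continuous)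
  have hρ_nonneg : ∀ x, 0 ≤ ρ x := fun x =>
    Finset.sum_nonneg fun i _ => Real.rpow_nonneg (norm_nonneg _) _
  have hρ_pos : ∀ x : EuclideanSpace ℂ (Fin n), x ≠ 0 → 0 < ρ x := by
    intro x hx
    obtain ⟨i, hi⟩ : ∃ i, x i ≠ 0 := by
      by_contra h
      push_neg at h
      exact hx (PiLp.ext fun j => by simpa using h j)
    refine Finset.sum_pos' (fun j _ => Real.rpow_nonneg (norm_nonneg _) _)
      ⟨i, Finset.mem_univ i, Real.rpow_pos_of_pos (norm_pos_iff.mpr hi) _⟩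
  -- scaling identity for ρ
  have hscale : ∀ (s : ℝ), 0 < s → ∀ x : EuclideanSpace ℂ (Fin n),
      ρ (WithLp.toLp 2 (fun i => (s : ℂ) ^ (w i) * x i)) = s ^ ((2 * k : ℕ) : ℝ) * ρ x := by
    intro s hs x
    rw [hρ_def]
    simp only [PiLp.toLp_apply]
    rw [Finset.mul_sum]
    refine Finset.sum_congr rfl fun i _ => ?_
    have habs : ‖(s : ℂ) ^ (w i) * x i‖ = s ^ (w i) * ‖x i‖ := by
      rw [norm_mul, norm_pow, Complex.norm_real, Real.norm_eq_abs, abs_of_pos hs]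
    rw [habs, Real.mul_rpow (by positivity) (norm_nonneg _)]
    congr 1
    rw [← Real.rpow_natCast s (w i), ← Real.rpow_mul hs.le]
    congr 1
    rw [hp_def]
    simp only
    push_cast
    rw [mul_comm, div_mul_cancel₀ _ (hwne i)]
  -- the quasi-sphere
  set S : Set (EuclideanSpace ℂ (Fin n)) := {x | ρ x = 1} with hS_def
  have hSne : S.Nonempty := by
    refine ⟨EuclideanSpace.single (⟨0, hn⟩ : Fin n) (1 : ℂ), ?_⟩
    show ρ _ = 1
    rw [hρ_def]
    simp only
    rw [Finset.sum_eq_single (⟨0, hn⟩ : Fin n)]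
    · simp [EuclideanSpace.single_apply]
    · intro j _ hj
      rw [EuclideanSpace.single_apply]
      simp [hj, Real.zero_rpow (hp j).ne']
    · intro h
      exact absurd (Finset.mem_univ _) h
  have hS_compact : IsCompact S := by
    have hclosed : IsClosed S := isClosed_eq hρ_cont continuous_const
    have hbdd : Bornology.IsBounded S := by
      refine (Metric.isBounded_closedBall (x := (0 : EuclideanSpace ℂ (Fin n)))
        (r := Real.sqrt n)).subset ?_
      intro x hx
      have hxi : ∀ i, ‖x i‖ ≤ 1 := by
        intro i
        by_contra h
        push_neg at h
        have h1 : ‖x i‖ ^ p i ≤ ρ x :=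
          Finset.single_le_sum (fun j _ => Real.rpow_nonneg (norm_nonneg _) _)
            (Finset.mem_univ i)
        have h2 : 1 < ‖x i‖ ^ p i :=
          Real.one_lt_rpow_iff_of_pos (lt_trans one_pos h) |>.2 (Or.inl ⟨h, hp i⟩)
        have : ρ x = 1 := hx
        linarith
      rw [Metric.mem_closedBall, dist_zero_right, EuclideanSpace.norm_eq]
      refine Real.sqrt_le_sqrt ?_ |>.trans (le_of_eq rfl)
      calc (∑ i, ‖x i‖ ^ 2) ≤ ∑ _i : Fin n, (1 : ℝ) := by
            refine Finset.sum_le_sum fun i _ => ?_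
            have h1 : ‖x i‖ ≤ 1 := hxi i
            nlinarith [norm_nonneg (x i)]
        _ = n := by simp
    exact Metric.isCompact_of_isClosed_isBounded hclosed hbdd
  -- min and max of |f| on T ×ˢ S
  have hKne : (T ×ˢ S).Nonempty := hTne.prod hSne
  have hKcomp : IsCompact (T ×ˢ S) := hTcompact.prod hS_compact
  have hgcont : ContinuousOn
      (fun q : ℂ × EuclideanSpace ℂ (Fin n) => ‖f q.1 q.2‖) (T ×ˢ S) :=
    continuous_norm.comp_continuousOn
      (hfc.mono (Set.prod_mono_right (Set.subset_univ S)))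
  obtain ⟨q₁, hq₁, hmin⟩ := hKcomp.exists_isMinOn hKne hgcont
  obtain ⟨q₂, hq₂, hmax⟩ := hKcomp.exists_isMaxOn hKne hgcont
  have hC₁pos : 0 < ‖f q₁.1 q₁.2‖ := by
    refine norm_pos_iff.mpr ?_
    intro h
    have hx0 : q₁.2 = 0 := (hzero q₁.1 hq₁.1 q₁.2).1 h
    have : ρ q₁.2 = 1 := hq₁.2
    rw [hx0] at this
    have h0 : ρ (0 : EuclideanSpace ℂ (Fin n)) = 0 := by
      rw [hρ_def]
      refine Finset.sum_eq_zero fun i _ => ?_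
      simp [Real.zero_rpow (hp i).ne']
    rw [h0] at this
    norm_num at this
  refine ⟨‖f q₁.1 q₁.2‖, ‖f q₂.1 q₂.2‖, hC₁pos,
    isMinOn_iff.1 hmin q₂ hq₂, fun t ht x => ?_⟩
  have hsum : (∑ i, ‖x i‖ ^ ((2 * k : ℝ) / (w i : ℝ))) = ρ x := rfl
  rw [hsum]
  by_cases hx0 : x = 0
  · subst hx0
    have hfx : f t 0 = 0 := (hzero t ht 0).2 rfl
    have h0 : ρ (0 : EuclideanSpace ℂ (Fin n)) = 0 := by
      rw [hρ_def]
      refine Finset.sum_eq_zero fun i _ => ?_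
      simp [Real.zero_rpow (hp i).ne']
    rw [hfx, h0]
    simp
  · set r : ℝ := ρ x with hr_def
    have hr : 0 < r := hρ_pos x hx0
    set s : ℝ := r ^ (-(1 : ℝ) / (2 * k)) with hs_def
    have hs : 0 < s := Real.rpow_pos_of_pos hr _
    have h2k : ((2 * k : ℕ) : ℝ) ≠ 0 := by positivity
    have hs2k : s ^ ((2 * k : ℕ) : ℝ) = r⁻¹ := by
      rw [hs_def, ← Real.rpow_mul hr.le]
      rw [show (-(1 : ℝ) / (2 * k)) * ((2 * k : ℕ) : ℝ) = -1 by
        push_cast; field_simp]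
      exact Real.rpow_neg_one r
    set y : EuclideanSpace ℂ (Fin n) := WithLp.toLp 2 (fun i => (s : ℂ) ^ (w i) * x i) with hy_def
    have hρy : ρ y = 1 := by
      rw [hy_def, hscale s hs x, hs2k, ← hr_def, inv_mul_cancel₀ hr.ne']
    have hyS : y ∈ S := hρy
    have hfeq : f t y = (s : ℂ) ^ (2 * k) * f t x := hquasi t ht s hs x
    have habsfy : ‖f t y‖ = r⁻¹ * ‖f t x‖ := by
      rw [hfeq, norm_mul, norm_pow, Complex.norm_real, Real.norm_eq_abs, abs_of_pos hs]
      congr 1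
      rw [← Real.rpow_natCast s (2 * k)]
      exact hs2k
    have hfx : ‖f t x‖ = r * ‖f t y‖ := by
      rw [habsfy]
      field_simp
    have hmin' : ‖f q₁.1 q₁.2‖ ≤ ‖f t y‖ :=
      isMinOn_iff.1 hmin (t, y) ⟨ht, hyS⟩
    have hmax' : ‖f t y‖ ≤ ‖f q₂.1 q₂.2‖ :=
      isMaxOn_iff.1 hmax (t, y) ⟨ht, hyS⟩
    constructor
    · calc ‖f q₁.1 q₁.2‖ * r ≤ ‖f t y‖ * r :=
            mul_le_mul_of_nonneg_right hmin' hr.le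
        _ = ‖f t x‖ := by rw [hfx]; ring
    · calc ‖f t x‖ = ‖f t y‖ * r := by rw [hfx]; ring
        _ ≤ ‖f q₂.1 q₂.2‖ * r := mul_le_mul_of_nonneg_right hmax' hr.le
end

section
/- For t ∈ ℂ define f_t : ℂ² → ℂ by f_t(x, y) = x⁴ + y⁵ + t·x²y². Then for every t_0 ∈ ℂ with t_0 ≠ 0 there is a neighbourhood T ⊆ ℂ \ {0} of t_0 such that for all t ∈ T the germs at 0 of f_t and f_{t_0} are bi-Lipschitz right equivalent: there exist r > 0, L ≥ 1 and a map φ : B(0,r) → ℂ² with φ(0) = 0 such that (1/L)·‖x − y‖ ≤ ‖φ(x) − φ(y)‖ ≤ L·‖x − y‖ for all x, y ∈ B(0,r) and f_t(φ(x)) = f_{t_0}(x) for all x ∈ B(0,r). -/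
set_option maxHeartbeats 1000000

open Metric Set

noncomputable section T245aux

/-- first partial-derivative cofactor: `f_x = 2x·d1`. -/
def T245d1 (s : ℂ) (p : ℂ × ℂ) : ℂ := 2*p.1^2 + s*p.2^2
/-- second cofactor: `f_y = y·d2`. -/
def T245d2 (s : ℂ) (p : ℂ × ℂ) : ℂ := 5*p.2^3 + 2*s*p.1^2
/-- denominator. -/
def T245D (s : ℂ) (p : ℂ × ℂ) : ℝ := 2*‖T245d1 s p‖^2 + ‖T245d2 s p‖^2
/-- numerator vector. -/
def T245N (s : ℂ) (p : ℂ × ℂ) : ℂ × ℂ :=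
  (p.1*p.2^2*(starRingEnd ℂ) (T245d1 s p), p.1^2*p.2*(starRingEnd ℂ) (T245d2 s p))
/-- the vector field. -/
def T245V (c s : ℂ) (p : ℂ × ℂ) : ℂ × ℂ :=
  if T245D s p = 0 then 0 else (-(c / ((T245D s p : ℝ) : ℂ))) • T245N s p

lemma T245D_nonneg (s : ℂ) (p : ℂ × ℂ) : 0 ≤ T245D s p := by
  unfold T245D; positivity

lemma T245_norm_add_lower (u v : ℂ) : ‖u‖ - ‖v‖ ≤ ‖u + v‖ := by
  have h : ‖u‖ ≤ ‖u + v‖ + ‖v‖ := by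
    calc ‖u‖ = ‖(u + v) + (-v)‖ := by ring_nf
    _ ≤ ‖u + v‖ + ‖-v‖ := norm_add_le _ _
    _ = ‖u + v‖ + ‖v‖ := by rw [norm_neg]
  linarith

/-- the main coercivity constant. -/
def T245k₀ (μ : ℝ) : ℝ := (1+1/μ^2)/2 + 2*(1+16*μ^2)/μ^2 + (μ^2+16)/μ^4 + 1

lemma T245k₀_pos {μ : ℝ} (hμ : 0 < μ) : 0 < T245k₀ μ := by
  unfold T245k₀; positivity

lemma T245_le_k_mul {X D m k : ℝ} (hm : 0 < m) (hD : 0 ≤ D) (h : m * X ≤ D) (hk : 1/m ≤ k) :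
    X ≤ k * D := by
  have h1 : X ≤ (1/m) * D := by
    rw [one_div, ← div_eq_inv_mul, le_div_iff₀ hm]; linarith [h]
  calc X ≤ (1/m)*D := h1
  _ ≤ k*D := mul_le_mul_of_nonneg_right hk hD

/-- Coercivity: near the origin the denominator dominates `‖p‖⁴`. -/
lemma T245D_lower {μ : ℝ} (hμ : 0 < μ) {s : ℂ} (hsl : μ ≤ ‖s‖) (hsu : ‖s‖ ≤ 4*μ)
    {p : ℂ × ℂ} (hp : ‖p‖ ≤ min (μ^2/20) 1) :
    ‖p‖^4 ≤ T245k₀ μ * T245D s p := by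
  set a := ‖p.1‖ with ha_def
  set b := ‖p.2‖ with hb_def
  have ha : 0 ≤ a := norm_nonneg _
  have hb : 0 ≤ b := norm_nonneg _
  have hpa : a ≤ ‖p‖ := norm_fst_le p
  have hpb : b ≤ ‖p‖ := norm_snd_le p
  have hpn : ‖p‖ = max a b := Prod.norm_def p
  have hb20 : b ≤ μ^2/20 := le_trans hpb (le_trans hp (min_le_left _ _))
  have hb1 : b ≤ 1 := le_trans hpb (le_trans hp (min_le_right _ _))
  have ha1 : a ≤ 1 := le_trans hpa (le_trans hp (min_le_right _ _))
  have h2 : ‖(2:ℂ)‖ = 2 := by norm_num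
  have h5 : ‖(5:ℂ)‖ = 5 := by norm_num
  -- lower bounds on the factors
  have hd1a : 2*a^2 - ‖s‖*b^2 ≤ ‖T245d1 s p‖ := by
    have := T245_norm_add_lower (2*p.1^2) (s*p.2^2)
    simpa [T245d1, norm_mul, norm_pow, h2, ha_def, hb_def] using this
  have hd1b : ‖s‖*b^2 - 2*a^2 ≤ ‖T245d1 s p‖ := by
    have := T245_norm_add_lower (s*p.2^2) (2*p.1^2)
    have hcomm : s*p.2^2 + 2*p.1^2 = T245d1 s p := by unfold T245d1; ring
    rw [hcomm] at this
    simpa [norm_mul, norm_pow, h2, ha_def, hb_def] using this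
  have hd2a : 2*‖s‖*a^2 - 5*b^3 ≤ ‖T245d2 s p‖ := by
    have := T245_norm_add_lower (2*s*p.1^2) (5*p.2^3)
    have hcomm : 2*s*p.1^2 + 5*p.2^3 = T245d2 s p := by unfold T245d2; ring
    rw [hcomm] at this
    simpa [norm_mul, norm_pow, h2, h5, ha_def, hb_def, mul_assoc] using this
  have hDd1 : 2*‖T245d1 s p‖^2 ≤ T245D s p := by
    unfold T245D; nlinarith [sq_nonneg ‖T245d2 s p‖]
  have hDd2 : ‖T245d2 s p‖^2 ≤ T245D s p := by
    unfold T245D; nlinarith [sq_nonneg ‖T245d1 s p‖]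
  have hDnn : 0 ≤ T245D s p := T245D_nonneg s p
  have hd1nn : (0:ℝ) ≤ ‖T245d1 s p‖ := norm_nonneg _
  have hd2nn : (0:ℝ) ≤ ‖T245d2 s p‖ := norm_nonneg _
  have hσ : (0:ℝ) < ‖s‖ := lt_of_lt_of_le hμ hsl
  have hksplit : T245k₀ μ = 1/2 + 1/(2*μ^2) + (2/μ^2 + 32) + (1/μ^2 + 16/μ^4) + 1 := by
    unfold T245k₀; field_simp; ring
  rw [hpn]
  rcases le_total (‖s‖*b^2) (a^2) with hA | hB
  · -- case A : `d1` dominates via `x` part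
    have hn1 : a^2 ≤ ‖T245d1 s p‖ := by linarith
    have hD2a4 : 2*a^4 ≤ T245D s p := by nlinarith [sq_nonneg (a^2)]
    rcases le_total b a with h1 | h1
    · rw [max_eq_left h1]
      refine T245_le_k_mul (by norm_num : (0:ℝ) < 2) hDnn hD2a4 ?_
      rw [hksplit]; have h2 : (0:ℝ) ≤ 1/(2*μ^2) := by positivity
      have h3 : (0:ℝ) ≤ 2/μ^2 + 32 := by positivity
      have h4 : (0:ℝ) ≤ 1/μ^2 + 16/μ^4 := by positivity
      linarith
    · rw [max_eq_right h1]
      have hmub : μ*b^2 ≤ a^2 :=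
        le_trans (mul_le_mul_of_nonneg_right hsl (by positivity)) hA
      have hmub2 : μ^2*b^4 ≤ a^4 := by
        have h6 := mul_le_mul hmub hmub (by positivity) (by positivity : (0:ℝ) ≤ a^2)
        nlinarith [h6]
      refine T245_le_k_mul (by positivity : (0:ℝ) < 2*μ^2) hDnn (by linarith) ?_
      rw [hksplit]; have h3 : (0:ℝ) ≤ 2/μ^2 + 32 := by positivity
      have h4 : (0:ℝ) ≤ 1/μ^2 + 16/μ^4 := by positivity
      linarith
  · rcases le_total (4*a^2) (‖s‖*b^2) with hB1 | hB2
    · -- case B1 : `d1` dominates via `y` part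
      have hn1 : μ*b^2/2 ≤ ‖T245d1 s p‖ := by
        have h6 : μ*b^2 ≤ ‖s‖*b^2 := mul_le_mul_of_nonneg_right hsl (by positivity)
        linarith
      have hD : μ^2*b^4/2 ≤ T245D s p := by
        have hsq := mul_le_mul hn1 hn1 (by positivity) hd1nn
        nlinarith [hsq]
      have ha4 : a^4 ≤ 16*(μ^2*b^4) := by
        have h6 : ‖s‖*b^2 ≤ 4*μ*b^2 := mul_le_mul_of_nonneg_right hsu (by positivity)
        have hab : a^2 ≤ μ*b^2 := by linarith
        have h7 := mul_le_mul hab hab (by positivity) (by positivity : (0:ℝ) ≤ μ*b^2)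
        nlinarith [h7]
      rcases le_total b a with h1 | h1
      · rw [max_eq_left h1]
        refine T245_le_k_mul (by norm_num : (0:ℝ) < 1/32) hDnn (by linarith) ?_
        rw [hksplit]; have h2 : (0:ℝ) ≤ 1/(2*μ^2) := by positivity
        have h3 : (0:ℝ) ≤ 2/μ^2 := by positivity
        have h4 : (0:ℝ) ≤ 1/μ^2 + 16/μ^4 := by positivity
        have h5 : (1:ℝ)/(1/32) = 32 := by norm_num
        rw [h5]; linarith
      · rw [max_eq_right h1]
        refine T245_le_k_mul (by positivity : (0:ℝ) < μ^2/2) hDnn (by linarith) ?_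
        rw [hksplit]
        have h2 : (0:ℝ) ≤ 1/(2*μ^2) := by positivity
        have h4 : (0:ℝ) ≤ 1/μ^2 + 16/μ^4 := by positivity
        have h5 : 1/(μ^2/2) = 2/μ^2 := by ring
        rw [h5]; linarith
    · -- case B2 : `d2` dominates
      have h5b3 : 5*b^3 ≤ ‖s‖*a^2 := by
        have hc1 : 5*b^3 ≤ (μ^2/4)*b^2 := by nlinarith
        have hc2 : ‖s‖*(5*b^3) ≤ ‖s‖*((μ^2/4)*b^2) := mul_le_mul_of_nonneg_left hc1 hσ.le
        have hc4 : (μ^2/4)*(‖s‖*b^2) ≤ (μ^2/4)*(4*a^2) :=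
          mul_le_mul_of_nonneg_left hB2 (by positivity)
        have hc5 : μ*μ*a^2 ≤ ‖s‖*‖s‖*a^2 :=
          mul_le_mul_of_nonneg_right (mul_self_le_mul_self hμ.le hsl) (sq_nonneg a)
        have hc6 : ‖s‖*(5*b^3) ≤ ‖s‖*(‖s‖*a^2) := by nlinarith [hc5, sq_nonneg μ]
        exact (mul_le_mul_iff_right₀ hσ).1 hc6
      have hn2 : μ*a^2 ≤ ‖T245d2 s p‖ := by
        have h6 : μ*a^2 ≤ ‖s‖*a^2 := mul_le_mul_of_nonneg_right hsl (sq_nonneg a)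
        linarith
      have hD : μ^2*a^4 ≤ T245D s p := by
        have hsq := mul_le_mul hn2 hn2 (by positivity) hd2nn
        nlinarith [hsq]
      have hb4 : μ^2*b^4 ≤ 16*a^4 := by
        have h6 := mul_le_mul hB2 hB2 (by positivity) (by positivity : (0:ℝ) ≤ 4*a^2)
        have h7 : μ*μ*b^4 ≤ ‖s‖*‖s‖*b^4 :=
          mul_le_mul_of_nonneg_right (mul_self_le_mul_self hμ.le hsl) (by positivity)
        nlinarith [h6, h7]
      rcases le_total b a with h1 | h1
      · rw [max_eq_left h1]
        refine T245_le_k_mul (by positivity : (0:ℝ) < μ^2) hDnn hD ?_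
        rw [hksplit]
        have h2 : (0:ℝ) ≤ 1/(2*μ^2) := by positivity
        have h3 : (0:ℝ) ≤ 2/μ^2 + 32 := by positivity
        have h4 : (0:ℝ) ≤ 16/μ^4 := by positivity
        have h5 : 1/μ^2 + 16/μ^4 = 1/μ^2 + 16/μ^4 := rfl
        linarith
      · rw [max_eq_right h1]
        have hmb : (μ^4/16)*b^4 ≤ T245D s p := by
          have := mul_le_mul_of_nonneg_left hb4 (sq_nonneg μ)
          nlinarith
        refine T245_le_k_mul (by positivity : (0:ℝ) < μ^4/16) hDnn hmb ?_
        rw [hksplit]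
        have h2 : (0:ℝ) ≤ 1/(2*μ^2) := by positivity
        have h3 : (0:ℝ) ≤ 2/μ^2 + 32 := by positivity
        have h4 : (0:ℝ) ≤ 1/μ^2 := by positivity
        have h5 : 1/(μ^4/16) = 16/μ^4 := by ring
        rw [h5]; linarith

def T245r₀ (μ : ℝ) : ℝ := min (μ^2/20) 1

lemma T245r₀_pos {μ : ℝ} (hμ : 0 < μ) : 0 < T245r₀ μ := by
  unfold T245r₀; positivity

lemma T245D_pos {μ : ℝ} (hμ : 0 < μ) {s : ℂ} (hsl : μ ≤ ‖s‖) (hsu : ‖s‖ ≤ 4*μ)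
    {p : ℂ × ℂ} (hp : ‖p‖ ≤ T245r₀ μ) (hp0 : p ≠ 0) : 0 < T245D s p := by
  have h1 := T245D_lower hμ hsl hsu hp
  have h2 : 0 < ‖p‖ := norm_pos_iff.2 hp0
  have h3 : 0 < ‖p‖^4 := by positivity
  nlinarith [T245k₀_pos hμ, T245D_nonneg s p]

lemma T245nmul_le {u v : ℂ} {A B : ℝ} (hu : ‖u‖ ≤ A) (hv : ‖v‖ ≤ B) : ‖u*v‖ ≤ A*B := by
  rw [norm_mul]
  exact mul_le_mul hu hv (norm_nonneg v) ((norm_nonneg u).trans hu)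

lemma T245normconj (z : ℂ) : ‖(starRingEnd ℂ) z‖ = ‖z‖ := by
  simp

lemma T245d1_upper {μ : ℝ} {s : ℂ} (hsu : ‖s‖ ≤ 4*μ) (p : ℂ × ℂ) :
    ‖T245d1 s p‖ ≤ (2+4*μ)*‖p‖^2 := by
  have h2 : ‖(2:ℂ)‖ = 2 := by norm_num
  have hpa : ‖p.1‖ ≤ ‖p‖ := norm_fst_le p
  have hpb : ‖p.2‖ ≤ ‖p‖ := norm_snd_le p
  have ha2 : ‖p.1^2‖ ≤ ‖p‖^2 := by
    rw [norm_pow]; exact pow_le_pow_left₀ (norm_nonneg _) hpa 2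
  have hb2 : ‖p.2^2‖ ≤ ‖p‖^2 := by
    rw [norm_pow]; exact pow_le_pow_left₀ (norm_nonneg _) hpb 2
  calc ‖T245d1 s p‖ ≤ ‖2*p.1^2‖ + ‖s*p.2^2‖ := norm_add_le _ _
  _ ≤ 2*‖p‖^2 + (4*μ)*‖p‖^2 := by
      gcongr
      · exact T245nmul_le (le_of_eq h2) ha2
      · exact T245nmul_le hsu hb2
  _ = (2+4*μ)*‖p‖^2 := by ring

lemma T245d2_upper {μ : ℝ} {s : ℂ} (hsu : ‖s‖ ≤ 4*μ) {p : ℂ × ℂ} (hp1 : ‖p‖ ≤ 1) :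
    ‖T245d2 s p‖ ≤ (5+8*μ)*‖p‖^2 := by
  have h5 : ‖(5:ℂ)‖ = 5 := by norm_num
  have h2 : ‖(2:ℂ)‖ = 2 := by norm_num
  have hpa : ‖p.1‖ ≤ ‖p‖ := norm_fst_le p
  have hpb : ‖p.2‖ ≤ ‖p‖ := norm_snd_le p
  have hb3 : ‖p.2^3‖ ≤ ‖p‖^2 := by
    rw [norm_pow]
    calc ‖p.2‖^3 ≤ ‖p‖^3 := pow_le_pow_left₀ (norm_nonneg _) hpb 3
    _ ≤ ‖p‖^2 := by nlinarith [norm_nonneg p]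
  have ha2 : ‖p.1^2‖ ≤ ‖p‖^2 := by
    rw [norm_pow]; exact pow_le_pow_left₀ (norm_nonneg _) hpa 2
  calc ‖T245d2 s p‖ ≤ ‖5*p.2^3‖ + ‖2*s*p.1^2‖ := norm_add_le _ _
  _ ≤ 5*‖p‖^2 + (2*(4*μ))*‖p‖^2 := by
      gcongr
      · exact T245nmul_le (le_of_eq h5) hb3
      · have : ‖2*s‖ ≤ 2*(4*μ) := by
          rw [norm_mul, h2]; nlinarith [norm_nonneg s]
        exact T245nmul_le this ha2
  _ = (5+8*μ)*‖p‖^2 := by ring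

lemma T245N1_upper {μ : ℝ} {s : ℂ} (hsu : ‖s‖ ≤ 4*μ) (p : ℂ × ℂ) :
    ‖(T245N s p).1‖ ≤ (2+4*μ)*‖p‖^5 := by
  have hpa : ‖p.1‖ ≤ ‖p‖ := norm_fst_le p
  have hpb : ‖p.2‖ ≤ ‖p‖ := norm_snd_le p
  have hb2 : ‖p.2^2‖ ≤ ‖p‖^2 := by
    rw [norm_pow]; exact pow_le_pow_left₀ (norm_nonneg _) hpb 2
  have hd1 : ‖(starRingEnd ℂ) (T245d1 s p)‖ ≤ (2+4*μ)*‖p‖^2 := by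
    rw [T245normconj]; exact T245d1_upper hsu p
  have : ‖(T245N s p).1‖ ≤ (‖p‖*‖p‖^2)*((2+4*μ)*‖p‖^2) :=
    T245nmul_le (T245nmul_le hpa hb2) hd1
  calc ‖(T245N s p).1‖ ≤ (‖p‖*‖p‖^2)*((2+4*μ)*‖p‖^2) := this
  _ = (2+4*μ)*‖p‖^5 := by ring

lemma T245N2_upper {μ : ℝ} {s : ℂ} (hsu : ‖s‖ ≤ 4*μ) {p : ℂ × ℂ} (hp1 : ‖p‖ ≤ 1) :
    ‖(T245N s p).2‖ ≤ (5+8*μ)*‖p‖^5 := by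
  have hpa : ‖p.1‖ ≤ ‖p‖ := norm_fst_le p
  have hpb : ‖p.2‖ ≤ ‖p‖ := norm_snd_le p
  have ha2 : ‖p.1^2‖ ≤ ‖p‖^2 := by
    rw [norm_pow]; exact pow_le_pow_left₀ (norm_nonneg _) hpa 2
  have hd2 : ‖(starRingEnd ℂ) (T245d2 s p)‖ ≤ (5+8*μ)*‖p‖^2 := by
    rw [T245normconj]; exact T245d2_upper hsu hp1
  have : ‖(T245N s p).2‖ ≤ (‖p‖^2*‖p‖)*((5+8*μ)*‖p‖^2) :=
    T245nmul_le (T245nmul_le ha2 hpb) hd2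
  calc ‖(T245N s p).2‖ ≤ (‖p‖^2*‖p‖)*((5+8*μ)*‖p‖^2) := this
  _ = (5+8*μ)*‖p‖^5 := by ring

def T245kN (μ : ℝ) : ℝ := 7+12*μ
def T245kD (μ : ℝ) : ℝ := 2*(2+4*μ)^2 + (5+8*μ)^2

lemma T245N_upper {μ : ℝ} (hμ : 0 < μ) {s : ℂ} (hsu : ‖s‖ ≤ 4*μ) {p : ℂ × ℂ}
    (hp1 : ‖p‖ ≤ 1) (i : Bool) :
    ‖if i then (T245N s p).1 else (T245N s p).2‖ ≤ T245kN μ*‖p‖^5 := by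
  have h5 : (0:ℝ) ≤ ‖p‖^5 := by positivity
  cases i
  · simp only [if_neg Bool.false_ne_true]
    calc ‖(T245N s p).2‖ ≤ (5+8*μ)*‖p‖^5 := T245N2_upper hsu hp1
    _ ≤ T245kN μ*‖p‖^5 := by unfold T245kN; nlinarith
  · simp only [if_pos]
    calc ‖(T245N s p).1‖ ≤ (2+4*μ)*‖p‖^5 := T245N1_upper hsu p
    _ ≤ T245kN μ*‖p‖^5 := by unfold T245kN; nlinarith

lemma T245D_upper {μ : ℝ} (hμ : 0 < μ) {s : ℂ} (hsu : ‖s‖ ≤ 4*μ) {p : ℂ × ℂ}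
    (hp1 : ‖p‖ ≤ 1) : T245D s p ≤ T245kD μ*‖p‖^4 := by
  have h1 := T245d1_upper (μ := μ) hsu p
  have h2 := T245d2_upper (μ := μ) hsu hp1
  have h1n : (0:ℝ) ≤ ‖T245d1 s p‖ := norm_nonneg _
  have h2n : (0:ℝ) ≤ ‖T245d2 s p‖ := norm_nonneg _
  unfold T245D T245kD
  nlinarith [mul_le_mul h1 h1 h1n (by positivity : (0:ℝ) ≤ (2+4*μ)*‖p‖^2),
    mul_le_mul h2 h2 h2n (by positivity : (0:ℝ) ≤ (5+8*μ)*‖p‖^2)]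

lemma T245fst_sub (p q : ℂ × ℂ) : (p - q).1 = p.1 - q.1 := rfl
lemma T245snd_sub (p q : ℂ × ℂ) : (p - q).2 = p.2 - q.2 := rfl

lemma T245d1_diff {μ : ℝ} (hμ : 0 < μ) {s : ℂ} (hsu : ‖s‖ ≤ 4*μ) (p q : ℂ × ℂ) :
    ‖T245d1 s p - T245d1 s q‖ ≤ (4+8*μ) * (max ‖p‖ ‖q‖) * ‖p - q‖ := by
  set M := max ‖p‖ ‖q‖ with hM
  have hp1 : ‖p.1‖ ≤ M := (norm_fst_le p).trans (le_max_left _ _)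
  have hq1 : ‖q.1‖ ≤ M := (norm_fst_le q).trans (le_max_right _ _)
  have hp2 : ‖p.2‖ ≤ M := (norm_snd_le p).trans (le_max_left _ _)
  have hq2 : ‖q.2‖ ≤ M := (norm_snd_le q).trans (le_max_right _ _)
  have hd1 : ‖p.1 - q.1‖ ≤ ‖p - q‖ := by rw [← T245fst_sub]; exact norm_fst_le _
  have hd2 : ‖p.2 - q.2‖ ≤ ‖p - q‖ := by rw [← T245snd_sub]; exact norm_snd_le _
  have key : T245d1 s p - T245d1 s q
      = 2*((p.1+q.1)*(p.1-q.1)) + s*((p.2+q.2)*(p.2-q.2)) := by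
    unfold T245d1; ring
  have h2 : ‖(2:ℂ)‖ = 2 := by norm_num
  have hs1 : ‖(p.1+q.1)*(p.1-q.1)‖ ≤ (2*M)*‖p-q‖ :=
    T245nmul_le (le_trans (norm_add_le _ _) (by linarith)) hd1
  have hs2 : ‖(p.2+q.2)*(p.2-q.2)‖ ≤ (2*M)*‖p-q‖ :=
    T245nmul_le (le_trans (norm_add_le _ _) (by linarith)) hd2
  calc ‖T245d1 s p - T245d1 s q‖
      ≤ ‖2*((p.1+q.1)*(p.1-q.1))‖ + ‖s*((p.2+q.2)*(p.2-q.2))‖ := by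
        rw [key]; exact norm_add_le _ _
  _ ≤ 2*((2*M)*‖p-q‖) + (4*μ)*((2*M)*‖p-q‖) := by
      gcongr
      · exact T245nmul_le (le_of_eq h2) hs1
      · exact T245nmul_le hsu hs2
  _ = (4+8*μ) * M * ‖p-q‖ := by ring

lemma T245d2_diff {μ : ℝ} (hμ : 0 < μ) {s : ℂ} (hsu : ‖s‖ ≤ 4*μ) {p q : ℂ × ℂ}
    (hM1 : max ‖p‖ ‖q‖ ≤ 1) :
    ‖T245d2 s p - T245d2 s q‖ ≤ (15+16*μ) * (max ‖p‖ ‖q‖) * ‖p - q‖ := by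
  set M := max ‖p‖ ‖q‖ with hM
  have hM0 : 0 ≤ M := le_trans (norm_nonneg p) (le_max_left _ _)
  have hp1 : ‖p.1‖ ≤ M := (norm_fst_le p).trans (le_max_left _ _)
  have hq1 : ‖q.1‖ ≤ M := (norm_fst_le q).trans (le_max_right _ _)
  have hp2 : ‖p.2‖ ≤ M := (norm_snd_le p).trans (le_max_left _ _)
  have hq2 : ‖q.2‖ ≤ M := (norm_snd_le q).trans (le_max_right _ _)
  have hd1 : ‖p.1 - q.1‖ ≤ ‖p - q‖ := by rw [← T245fst_sub]; exact norm_fst_le _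
  have hd2 : ‖p.2 - q.2‖ ≤ ‖p - q‖ := by rw [← T245snd_sub]; exact norm_snd_le _
  have key : T245d2 s p - T245d2 s q
      = 5*((p.2^2+p.2*q.2+q.2^2)*(p.2-q.2)) + (2*s)*((p.1+q.1)*(p.1-q.1)) := by
    unfold T245d2; ring
  have h5 : ‖(5:ℂ)‖ = 5 := by norm_num
  have h2 : ‖(2:ℂ)‖ = 2 := by norm_num
  have hsq : ‖p.2^2+p.2*q.2+q.2^2‖ ≤ 3*M := by
    have e1 : ‖p.2^2‖ ≤ M*M := by rw [pow_two]; exact T245nmul_le hp2 hp2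
    have e2 : ‖p.2*q.2‖ ≤ M*M := T245nmul_le hp2 hq2
    have e3 : ‖q.2^2‖ ≤ M*M := by rw [pow_two]; exact T245nmul_le hq2 hq2
    have hMM : M*M ≤ M := by nlinarith
    calc ‖p.2^2+p.2*q.2+q.2^2‖ ≤ ‖p.2^2+p.2*q.2‖ + ‖q.2^2‖ := norm_add_le _ _
    _ ≤ (‖p.2^2‖ + ‖p.2*q.2‖) + ‖q.2^2‖ := by gcongr; exact norm_add_le _ _
    _ ≤ 3*M := by linarith
  have hs1 : ‖(p.2^2+p.2*q.2+q.2^2)*(p.2-q.2)‖ ≤ (3*M)*‖p-q‖ := T245nmul_le hsq hd2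
  have hs2 : ‖(p.1+q.1)*(p.1-q.1)‖ ≤ (2*M)*‖p-q‖ :=
    T245nmul_le (le_trans (norm_add_le _ _) (by linarith)) hd1
  have h2s : ‖2*s‖ ≤ 2*(4*μ) := by rw [norm_mul, h2]; nlinarith [norm_nonneg s]
  calc ‖T245d2 s p - T245d2 s q‖
      ≤ ‖5*((p.2^2+p.2*q.2+q.2^2)*(p.2-q.2))‖ + ‖(2*s)*((p.1+q.1)*(p.1-q.1))‖ := by
        rw [key]; exact norm_add_le _ _
  _ ≤ 5*((3*M)*‖p-q‖) + (2*(4*μ))*((2*M)*‖p-q‖) := by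
      gcongr
      · exact T245nmul_le (le_of_eq h5) hs1
      · exact T245nmul_le h2s hs2
  _ = (15+16*μ) * M * ‖p-q‖ := by ring

def T245CN (μ : ℝ) : ℝ := 30+40*μ
def T245CD (μ : ℝ) : ℝ := 4*(2+4*μ)*(4+8*μ) + 2*(5+8*μ)*(15+16*μ)

lemma T245N1_diff {μ : ℝ} (hμ : 0 < μ) {s : ℂ} (hsu : ‖s‖ ≤ 4*μ) {p q : ℂ × ℂ}
    (hM1 : max ‖p‖ ‖q‖ ≤ 1) :
    ‖(T245N s p).1 - (T245N s q).1‖ ≤ T245CN μ * (max ‖p‖ ‖q‖)^4 * ‖p - q‖ := by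
  set M := max ‖p‖ ‖q‖ with hM
  have hM0 : 0 ≤ M := le_trans (norm_nonneg p) (le_max_left _ _)
  have hp1 : ‖p.1‖ ≤ M := (norm_fst_le p).trans (le_max_left _ _)
  have hq1 : ‖q.1‖ ≤ M := (norm_fst_le q).trans (le_max_right _ _)
  have hp2 : ‖p.2‖ ≤ M := (norm_snd_le p).trans (le_max_left _ _)
  have hq2 : ‖q.2‖ ≤ M := (norm_snd_le q).trans (le_max_right _ _)
  have hd1 : ‖p.1 - q.1‖ ≤ ‖p - q‖ := by rw [← T245fst_sub]; exact norm_fst_le _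
  have hd2 : ‖p.2 - q.2‖ ≤ ‖p - q‖ := by rw [← T245snd_sub]; exact norm_snd_le _
  have hup : ‖p‖ ≤ M := le_max_left _ _
  have huq : ‖q‖ ≤ M := le_max_right _ _
  have hDp : ‖(starRingEnd ℂ) (T245d1 s p)‖ ≤ (2+4*μ)*M^2 := by
    rw [T245normconj]
    calc ‖T245d1 s p‖ ≤ (2+4*μ)*‖p‖^2 := T245d1_upper hsu p
    _ ≤ (2+4*μ)*M^2 := by
        have h9 : ‖p‖^2 ≤ M^2 := pow_le_pow_left₀ (norm_nonneg _) hup 2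
        nlinarith
  have hDq : ‖(starRingEnd ℂ) (T245d1 s q)‖ ≤ (2+4*μ)*M^2 := by
    rw [T245normconj]
    calc ‖T245d1 s q‖ ≤ (2+4*μ)*‖q‖^2 := T245d1_upper hsu q
    _ ≤ (2+4*μ)*M^2 := by
        have h9 : ‖q‖^2 ≤ M^2 := pow_le_pow_left₀ (norm_nonneg _) huq 2
        nlinarith
  have hDdiff : ‖(starRingEnd ℂ) (T245d1 s p) - (starRingEnd ℂ) (T245d1 s q)‖
      ≤ (4+8*μ)*M*‖p-q‖ := by
    rw [← map_sub, T245normconj]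
    exact T245d1_diff hμ hsu p q
  have key : (T245N s p).1 - (T245N s q).1
      = (p.1-q.1)*p.2^2*(starRingEnd ℂ) (T245d1 s p)
        + q.1*((p.2+q.2)*(p.2-q.2))*(starRingEnd ℂ) (T245d1 s p)
        + q.1*q.2^2*((starRingEnd ℂ) (T245d1 s p) - (starRingEnd ℂ) (T245d1 s q)) := by
    unfold T245N; simp only; ring
  have e1 : ‖(p.1-q.1)*p.2^2*(starRingEnd ℂ) (T245d1 s p)‖
      ≤ (‖p-q‖*M^2)*((2+4*μ)*M^2) := by
    refine T245nmul_le (T245nmul_le hd1 ?_) hDp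
    rw [norm_pow]; exact pow_le_pow_left₀ (norm_nonneg _) hp2 2
  have e2 : ‖q.1*((p.2+q.2)*(p.2-q.2))*(starRingEnd ℂ) (T245d1 s p)‖
      ≤ (M*((2*M)*‖p-q‖))*((2+4*μ)*M^2) := by
    refine T245nmul_le (T245nmul_le hq1 ?_) hDp
    exact T245nmul_le (le_trans (norm_add_le _ _) (by linarith)) hd2
  have e3 : ‖q.1*q.2^2*((starRingEnd ℂ) (T245d1 s p) - (starRingEnd ℂ) (T245d1 s q))‖
      ≤ (M*M^2)*((4+8*μ)*M*‖p-q‖) := by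
    refine T245nmul_le (T245nmul_le hq1 ?_) hDdiff
    rw [norm_pow]; exact pow_le_pow_left₀ (norm_nonneg _) hq2 2
  have htri : ‖(T245N s p).1 - (T245N s q).1‖
      ≤ (‖p-q‖*M^2)*((2+4*μ)*M^2) + (M*((2*M)*‖p-q‖))*((2+4*μ)*M^2)
        + (M*M^2)*((4+8*μ)*M*‖p-q‖) := by
    rw [key]
    calc _ ≤ ‖(p.1-q.1)*p.2^2*(starRingEnd ℂ) (T245d1 s p)
        + q.1*((p.2+q.2)*(p.2-q.2))*(starRingEnd ℂ) (T245d1 s p)‖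
        + ‖q.1*q.2^2*((starRingEnd ℂ) (T245d1 s p) - (starRingEnd ℂ) (T245d1 s q))‖ :=
          norm_add_le _ _
    _ ≤ _ := by
        gcongr
        exact le_trans (norm_add_le _ _) (add_le_add e1 e2)
  calc ‖(T245N s p).1 - (T245N s q).1‖
      ≤ (‖p-q‖*M^2)*((2+4*μ)*M^2) + (M*((2*M)*‖p-q‖))*((2+4*μ)*M^2)
        + (M*M^2)*((4+8*μ)*M*‖p-q‖) := htri
  _ = ((10+20*μ))*M^4*‖p-q‖ := by ring
  _ ≤ T245CN μ*M^4*‖p-q‖ := by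
      unfold T245CN
      have : (0:ℝ) ≤ M^4*‖p-q‖ := by positivity
      nlinarith

lemma T245N2_diff {μ : ℝ} (hμ : 0 < μ) {s : ℂ} (hsu : ‖s‖ ≤ 4*μ) {p q : ℂ × ℂ}
    (hM1 : max ‖p‖ ‖q‖ ≤ 1) :
    ‖(T245N s p).2 - (T245N s q).2‖ ≤ T245CN μ * (max ‖p‖ ‖q‖)^4 * ‖p - q‖ := by
  set M := max ‖p‖ ‖q‖ with hM
  have hM0 : 0 ≤ M := le_trans (norm_nonneg p) (le_max_left _ _)
  have hp1 : ‖p.1‖ ≤ M := (norm_fst_le p).trans (le_max_left _ _)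
  have hq1 : ‖q.1‖ ≤ M := (norm_fst_le q).trans (le_max_right _ _)
  have hp2 : ‖p.2‖ ≤ M := (norm_snd_le p).trans (le_max_left _ _)
  have hq2 : ‖q.2‖ ≤ M := (norm_snd_le q).trans (le_max_right _ _)
  have hd1 : ‖p.1 - q.1‖ ≤ ‖p - q‖ := by rw [← T245fst_sub]; exact norm_fst_le _
  have hd2 : ‖p.2 - q.2‖ ≤ ‖p - q‖ := by rw [← T245snd_sub]; exact norm_snd_le _
  have hup : ‖p‖ ≤ M := le_max_left _ _
  have huq : ‖q‖ ≤ M := le_max_right _ _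
  have hpu1 : ‖p‖ ≤ 1 := le_trans hup hM1
  have hqu1 : ‖q‖ ≤ 1 := le_trans huq hM1
  have hDp : ‖(starRingEnd ℂ) (T245d2 s p)‖ ≤ (5+8*μ)*M^2 := by
    rw [T245normconj]
    calc ‖T245d2 s p‖ ≤ (5+8*μ)*‖p‖^2 := T245d2_upper hsu hpu1
    _ ≤ (5+8*μ)*M^2 := by
        have h9 : ‖p‖^2 ≤ M^2 := pow_le_pow_left₀ (norm_nonneg _) hup 2
        nlinarith
  have hDdiff : ‖(starRingEnd ℂ) (T245d2 s p) - (starRingEnd ℂ) (T245d2 s q)‖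
      ≤ (15+16*μ)*M*‖p-q‖ := by
    rw [← map_sub, T245normconj]
    exact T245d2_diff hμ hsu hM1
  have key : (T245N s p).2 - (T245N s q).2
      = ((p.1+q.1)*(p.1-q.1))*p.2*(starRingEnd ℂ) (T245d2 s p)
        + q.1^2*(p.2-q.2)*(starRingEnd ℂ) (T245d2 s p)
        + q.1^2*q.2*((starRingEnd ℂ) (T245d2 s p) - (starRingEnd ℂ) (T245d2 s q)) := by
    unfold T245N; simp only; ring
  have e1 : ‖((p.1+q.1)*(p.1-q.1))*p.2*(starRingEnd ℂ) (T245d2 s p)‖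
      ≤ (((2*M)*‖p-q‖)*M)*((5+8*μ)*M^2) := by
    refine T245nmul_le (T245nmul_le ?_ hp2) hDp
    exact T245nmul_le (le_trans (norm_add_le _ _) (by linarith)) hd1
  have e2 : ‖q.1^2*(p.2-q.2)*(starRingEnd ℂ) (T245d2 s p)‖
      ≤ (M^2*‖p-q‖)*((5+8*μ)*M^2) := by
    refine T245nmul_le (T245nmul_le ?_ hd2) hDp
    rw [norm_pow]; exact pow_le_pow_left₀ (norm_nonneg _) hq1 2
  have e3 : ‖q.1^2*q.2*((starRingEnd ℂ) (T245d2 s p) - (starRingEnd ℂ) (T245d2 s q))‖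
      ≤ (M^2*M)*((15+16*μ)*M*‖p-q‖) := by
    refine T245nmul_le (T245nmul_le ?_ hq2) hDdiff
    rw [norm_pow]; exact pow_le_pow_left₀ (norm_nonneg _) hq1 2
  calc ‖(T245N s p).2 - (T245N s q).2‖
      ≤ (((2*M)*‖p-q‖)*M)*((5+8*μ)*M^2) + (M^2*‖p-q‖)*((5+8*μ)*M^2)
        + (M^2*M)*((15+16*μ)*M*‖p-q‖) := by
        rw [key]
        calc _ ≤ ‖((p.1+q.1)*(p.1-q.1))*p.2*(starRingEnd ℂ) (T245d2 s p)
            + q.1^2*(p.2-q.2)*(starRingEnd ℂ) (T245d2 s p)‖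
            + ‖q.1^2*q.2*((starRingEnd ℂ) (T245d2 s p) - (starRingEnd ℂ) (T245d2 s q))‖ :=
              norm_add_le _ _
        _ ≤ _ := by
            gcongr
            exact le_trans (norm_add_le _ _) (add_le_add e1 e2)
  _ = (30+40*μ)*M^4*‖p-q‖ := by ring
  _ ≤ T245CN μ*M^4*‖p-q‖ := le_of_eq (by unfold T245CN; ring)

lemma T245D_diff {μ : ℝ} (hμ : 0 < μ) {s : ℂ} (hsu : ‖s‖ ≤ 4*μ) {p q : ℂ × ℂ}
    (hM1 : max ‖p‖ ‖q‖ ≤ 1) :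
    T245D s p - T245D s q ≤ T245CD μ * (max ‖p‖ ‖q‖)^3 * ‖p - q‖ := by
  set M := max ‖p‖ ‖q‖ with hM
  have hM0 : 0 ≤ M := le_trans (norm_nonneg p) (le_max_left _ _)
  have hup : ‖p‖ ≤ M := le_max_left _ _
  have huq : ‖q‖ ≤ M := le_max_right _ _
  have hpu1 : ‖p‖ ≤ 1 := le_trans hup hM1
  have hqu1 : ‖q‖ ≤ 1 := le_trans huq hM1
  have hp2 : ‖p‖^2 ≤ M^2 := pow_le_pow_left₀ (norm_nonneg _) hup 2
  have hq2 : ‖q‖^2 ≤ M^2 := pow_le_pow_left₀ (norm_nonneg _) huq 2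
  have h1p : ‖T245d1 s p‖ ≤ (2+4*μ)*M^2 := by
    calc ‖T245d1 s p‖ ≤ (2+4*μ)*‖p‖^2 := T245d1_upper hsu p
    _ ≤ (2+4*μ)*M^2 := by nlinarith
  have h1q : ‖T245d1 s q‖ ≤ (2+4*μ)*M^2 := by
    calc ‖T245d1 s q‖ ≤ (2+4*μ)*‖q‖^2 := T245d1_upper hsu q
    _ ≤ (2+4*μ)*M^2 := by nlinarith
  have h2p : ‖T245d2 s p‖ ≤ (5+8*μ)*M^2 := by
    calc ‖T245d2 s p‖ ≤ (5+8*μ)*‖p‖^2 := T245d2_upper hsu hpu1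
    _ ≤ (5+8*μ)*M^2 := by nlinarith
  have h2q : ‖T245d2 s q‖ ≤ (5+8*μ)*M^2 := by
    calc ‖T245d2 s q‖ ≤ (5+8*μ)*‖q‖^2 := T245d2_upper hsu hqu1
    _ ≤ (5+8*μ)*M^2 := by nlinarith
  have hdd1 := T245d1_diff hμ hsu p q
  have hdd2 := T245d2_diff hμ hsu hM1
  have hs1 : ‖T245d1 s p‖ - ‖T245d1 s q‖ ≤ ‖T245d1 s p - T245d1 s q‖ :=
    norm_sub_norm_le _ _
  have hs2 : ‖T245d2 s p‖ - ‖T245d2 s q‖ ≤ ‖T245d2 s p - T245d2 s q‖ :=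
    norm_sub_norm_le _ _
  have h1nn : (0:ℝ) ≤ ‖T245d1 s p‖ + ‖T245d1 s q‖ := by positivity
  have h2nn : (0:ℝ) ≤ ‖T245d2 s p‖ + ‖T245d2 s q‖ := by positivity
  have key1 : ‖T245d1 s p‖^2 - ‖T245d1 s q‖^2
      ≤ (2*(2+4*μ)*M^2) * ((4+8*μ)*M*‖p-q‖) := by
    have e : ‖T245d1 s p‖^2 - ‖T245d1 s q‖^2
        = (‖T245d1 s p‖ + ‖T245d1 s q‖) * (‖T245d1 s p‖ - ‖T245d1 s q‖) := by ring
    rw [e]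
    calc (‖T245d1 s p‖ + ‖T245d1 s q‖) * (‖T245d1 s p‖ - ‖T245d1 s q‖)
        ≤ (‖T245d1 s p‖ + ‖T245d1 s q‖) * ‖T245d1 s p - T245d1 s q‖ :=
          mul_le_mul_of_nonneg_left hs1 h1nn
    _ ≤ (2*(2+4*μ)*M^2) * ((4+8*μ)*M*‖p-q‖) := by
        refine mul_le_mul (by linarith) hdd1 (norm_nonneg _) (by positivity)
  have key2 : ‖T245d2 s p‖^2 - ‖T245d2 s q‖^2
      ≤ (2*(5+8*μ)*M^2) * ((15+16*μ)*M*‖p-q‖) := by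
    have e : ‖T245d2 s p‖^2 - ‖T245d2 s q‖^2
        = (‖T245d2 s p‖ + ‖T245d2 s q‖) * (‖T245d2 s p‖ - ‖T245d2 s q‖) := by ring
    rw [e]
    calc (‖T245d2 s p‖ + ‖T245d2 s q‖) * (‖T245d2 s p‖ - ‖T245d2 s q‖)
        ≤ (‖T245d2 s p‖ + ‖T245d2 s q‖) * ‖T245d2 s p - T245d2 s q‖ :=
          mul_le_mul_of_nonneg_left hs2 h2nn
    _ ≤ (2*(5+8*μ)*M^2) * ((15+16*μ)*M*‖p-q‖) := by
        refine mul_le_mul (by linarith) hdd2 (norm_nonneg _) (by positivity)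
  unfold T245D T245CD
  nlinarith [key1, key2]

lemma T245V_zero (c s : ℂ) : T245V c s 0 = 0 := by
  unfold T245V T245D T245d1 T245d2
  norm_num

lemma T245prod_norm_le {w : ℂ × ℂ} {B : ℝ} (h1 : ‖w.1‖ ≤ B) (h2 : ‖w.2‖ ≤ B) : ‖w‖ ≤ B := by
  rw [Prod.norm_def]; exact max_le h1 h2

lemma T245V_norm {μ : ℝ} (hμ : 0 < μ) {s : ℂ} (hsl : μ ≤ ‖s‖) (hsu : ‖s‖ ≤ 4*μ)
    {p : ℂ × ℂ} (hp : ‖p‖ ≤ T245r₀ μ) (c : ℂ) :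
    ‖T245V c s p‖ ≤ ‖c‖ * (T245kN μ * T245k₀ μ) * ‖p‖ := by
  have hk₀ := T245k₀_pos hμ
  have hkN : 0 < T245kN μ := by unfold T245kN; positivity
  by_cases hD : T245D s p = 0
  · unfold T245V; rw [if_pos hD, norm_zero]; positivity
  have hp1 : ‖p‖ ≤ 1 := hp.trans (min_le_right _ _)
  have hDpos : 0 < T245D s p := lt_of_le_of_ne (T245D_nonneg s p) (Ne.symm hD)
  have hlow : ‖p‖^4 ≤ T245k₀ μ * T245D s p := T245D_lower hμ hsl hsu hp
  have hN : ‖T245N s p‖ ≤ T245kN μ * ‖p‖^5 := by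
    refine T245prod_norm_le ?_ ?_
    · simpa using T245N_upper hμ hsu hp1 true
    · simpa using T245N_upper hμ hsu hp1 false
  unfold T245V
  rw [if_neg hD, norm_smul, norm_neg, norm_div]
  have hcast : ‖((T245D s p : ℝ) : ℂ)‖ = T245D s p := by
    rw [Complex.norm_real]; exact abs_of_pos hDpos
  rw [hcast]
  have h5 : ‖p‖^5 ≤ T245k₀ μ * T245D s p * ‖p‖ := by
    have := mul_le_mul_of_nonneg_right hlow (norm_nonneg p)
    calc ‖p‖^5 = ‖p‖^4*‖p‖ := by ring
    _ ≤ T245k₀ μ * T245D s p * ‖p‖ := this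
  have hNN : ‖T245N s p‖ ≤ T245kN μ * (T245k₀ μ * T245D s p * ‖p‖) := by
    calc ‖T245N s p‖ ≤ T245kN μ * ‖p‖^5 := hN
    _ ≤ T245kN μ * (T245k₀ μ * T245D s p * ‖p‖) := by
        exact mul_le_mul_of_nonneg_left h5 hkN.le
  calc ‖c‖ / T245D s p * ‖T245N s p‖
      ≤ ‖c‖ / T245D s p * (T245kN μ * (T245k₀ μ * T245D s p * ‖p‖)) := by
        exact mul_le_mul_of_nonneg_left hNN (by positivity)
  _ = ‖c‖ * (T245kN μ * T245k₀ μ) * ‖p‖ := by field_simp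

def T245CV (μ : ℝ) : ℝ :=
  T245kN μ * T245k₀ μ + T245k₀ μ^2 * (T245CN μ * T245kD μ + T245kN μ * T245CD μ)

lemma T245CV_pos {μ : ℝ} (hμ : 0 < μ) : 0 < T245CV μ := by
  have := T245k₀_pos hμ
  unfold T245CV T245kN T245CN T245kD T245CD
  positivity

lemma T245V_lip_aux {μ : ℝ} (hμ : 0 < μ) {s : ℂ} (hsl : μ ≤ ‖s‖) (hsu : ‖s‖ ≤ 4*μ)
    {p q : ℂ × ℂ} (hp : ‖p‖ ≤ T245r₀ μ) (hq : ‖q‖ ≤ T245r₀ μ) (hqp : ‖q‖ ≤ ‖p‖) (c : ℂ) :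
    ‖T245V c s p - T245V c s q‖ ≤ ‖c‖ * T245CV μ * ‖p - q‖ := by
  have hk₀ := T245k₀_pos hμ
  have hkN : 0 < T245kN μ := by unfold T245kN; positivity
  have hkD : 0 < T245kD μ := by unfold T245kD; positivity
  have hCN : 0 < T245CN μ := by unfold T245CN; positivity
  have hCD : 0 < T245CD μ := by unfold T245CD; positivity
  by_cases hp0 : p = 0
  · have hq0 : q = 0 := by
      have : ‖q‖ ≤ 0 := by rw [hp0] at hqp; simpa using hqp
      exact norm_le_zero_iff.1 this
    rw [hp0, hq0]; simp [T245V_zero]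
  by_cases hq0 : q = 0
  · rw [hq0, T245V_zero, sub_zero, sub_zero]
    calc ‖T245V c s p‖ ≤ ‖c‖ * (T245kN μ * T245k₀ μ) * ‖p‖ := T245V_norm hμ hsl hsu hp c
    _ ≤ ‖c‖ * T245CV μ * ‖p‖ := by
        have hle : T245kN μ * T245k₀ μ ≤ T245CV μ := by
          unfold T245CV
          nlinarith [mul_nonneg (sq_nonneg (T245k₀ μ))
            (by positivity : (0:ℝ) ≤ T245CN μ * T245kD μ + T245kN μ * T245CD μ)]
        exact mul_le_mul_of_nonneg_right
          (mul_le_mul_of_nonneg_left hle (norm_nonneg c)) (norm_nonneg p)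
  -- both nonzero
  have hp1 : ‖p‖ ≤ 1 := hp.trans (min_le_right _ _)
  have hq1 : ‖q‖ ≤ 1 := hq.trans (min_le_right _ _)
  have hM : max ‖p‖ ‖q‖ = ‖p‖ := max_eq_left hqp
  have hM1 : max ‖p‖ ‖q‖ ≤ 1 := by rw [hM]; exact hp1
  have hDp : 0 < T245D s p := T245D_pos hμ hsl hsu hp hp0
  have hDq : 0 < T245D s q := T245D_pos hμ hsl hsu hq hq0
  have hlp : ‖p‖^4 ≤ T245k₀ μ * T245D s p := T245D_lower hμ hsl hsu hp
  have hlq : ‖q‖^4 ≤ T245k₀ μ * T245D s q := T245D_lower hμ hsl hsu hq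
  have hDdiff : |T245D s q - T245D s p| ≤ T245CD μ * ‖p‖^3 * ‖p - q‖ := by
    rw [abs_sub_le_iff]
    constructor
    · have := T245D_diff hμ hsu (p := q) (q := p) (by rwa [max_comm])
      rwa [max_comm, hM, norm_sub_rev] at this
    · have := T245D_diff hμ hsu (p := p) (q := q) hM1
      rwa [hM] at this
  set δ := ‖p - q‖ with hδ
  have hδnn : 0 ≤ δ := norm_nonneg _
  -- numerator bound, for each component
  have hnum : ∀ i : Bool,
      ‖(if i then (T245N s p).1 else (T245N s p).2) * ((T245D s q : ℝ) : ℂ)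
        - (if i then (T245N s q).1 else (T245N s q).2) * ((T245D s p : ℝ) : ℂ)‖
      ≤ (T245CN μ * T245kD μ + T245kN μ * T245CD μ) * (‖p‖^4 * ‖q‖^4) * δ := by
    intro i
    have hNdiff : ‖(if i then (T245N s p).1 else (T245N s p).2)
        - (if i then (T245N s q).1 else (T245N s q).2)‖ ≤ T245CN μ * ‖p‖^4 * δ := by
      cases i
      · simpa [hM] using T245N2_diff hμ hsu hM1
      · simpa [hM] using T245N1_diff hμ hsu hM1
    have hNq : ‖(if i then (T245N s q).1 else (T245N s q).2)‖ ≤ T245kN μ * ‖q‖^5 :=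
      T245N_upper hμ hsu hq1 i
    have hDqu : ‖((T245D s q : ℝ) : ℂ)‖ ≤ T245kD μ * ‖q‖^4 := by
      rw [Complex.norm_real, Real.norm_eq_abs, abs_of_pos hDq]
      exact T245D_upper hμ hsu hq1
    have hDsub : ‖((T245D s q : ℝ) : ℂ) - ((T245D s p : ℝ) : ℂ)‖
        ≤ T245CD μ * ‖p‖^3 * δ := by
      rw [← Complex.ofReal_sub, Complex.norm_real]
      exact hDdiff
    have key : (if i then (T245N s p).1 else (T245N s p).2) * ((T245D s q : ℝ) : ℂ)
        - (if i then (T245N s q).1 else (T245N s q).2) * ((T245D s p : ℝ) : ℂ)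
        = ((if i then (T245N s p).1 else (T245N s p).2)
            - (if i then (T245N s q).1 else (T245N s q).2)) * ((T245D s q : ℝ) : ℂ)
          + (if i then (T245N s q).1 else (T245N s q).2)
            * (((T245D s q : ℝ) : ℂ) - ((T245D s p : ℝ) : ℂ)) := by ring
    rw [key]
    have e1 : ‖((if i then (T245N s p).1 else (T245N s p).2)
        - (if i then (T245N s q).1 else (T245N s q).2)) * ((T245D s q : ℝ) : ℂ)‖
        ≤ (T245CN μ * ‖p‖^4 * δ) * (T245kD μ * ‖q‖^4) := T245nmul_le hNdiff hDqu
    have e2 : ‖(if i then (T245N s q).1 else (T245N s q).2)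
        * (((T245D s q : ℝ) : ℂ) - ((T245D s p : ℝ) : ℂ))‖
        ≤ (T245kN μ * ‖q‖^5) * (T245CD μ * ‖p‖^3 * δ) := T245nmul_le hNq hDsub
    have e3 : (T245kN μ * ‖q‖^5) * (T245CD μ * ‖p‖^3 * δ)
        ≤ T245kN μ * T245CD μ * (‖p‖^4 * ‖q‖^4) * δ := by
      have h9 : ‖q‖^5 * ‖p‖^3 ≤ ‖q‖^4 * ‖p‖^4 := by
        have : ‖q‖^4*‖p‖^3*‖q‖ ≤ ‖q‖^4*‖p‖^3*‖p‖ := by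
          exact mul_le_mul_of_nonneg_left hqp (by positivity)
        nlinarith [this]
      nlinarith [mul_le_mul_of_nonneg_left h9
        (by positivity : (0:ℝ) ≤ T245kN μ * T245CD μ * δ)]
    calc _ ≤ ‖((if i then (T245N s p).1 else (T245N s p).2)
        - (if i then (T245N s q).1 else (T245N s q).2)) * ((T245D s q : ℝ) : ℂ)‖
        + ‖(if i then (T245N s q).1 else (T245N s q).2)
            * (((T245D s q : ℝ) : ℂ) - ((T245D s p : ℝ) : ℂ))‖ := norm_add_le _ _
    _ ≤ (T245CN μ * ‖p‖^4 * δ) * (T245kD μ * ‖q‖^4)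
        + (T245kN μ * ‖q‖^5) * (T245CD μ * ‖p‖^3 * δ) := add_le_add e1 e2
    _ ≤ (T245CN μ * T245kD μ + T245kN μ * T245CD μ) * (‖p‖^4 * ‖q‖^4) * δ := by
        nlinarith [e3]
  -- assemble
  set A := T245CN μ * T245kD μ + T245kN μ * T245CD μ with hA_def
  have hA : (0:ℝ) < A := by positivity
  have hpq4 : ‖p‖^4*‖q‖^4 ≤ T245k₀ μ^2 * (T245D s p * T245D s q) := by
    nlinarith [mul_le_mul hlp hlq (by positivity : (0:ℝ) ≤ ‖q‖^4)
      (by positivity : (0:ℝ) ≤ T245k₀ μ * T245D s p)]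
  have hcomp : ∀ i : Bool,
      ‖(if i then (T245V c s p - T245V c s q).1 else (T245V c s p - T245V c s q).2)‖
      ≤ ‖c‖ * (T245k₀ μ^2 * A) * δ := by
    intro i
    have key : (if i then (T245V c s p - T245V c s q).1 else (T245V c s p - T245V c s q).2)
        = (-c) * (((if i then (T245N s p).1 else (T245N s p).2) * ((T245D s q : ℝ) : ℂ)
                  - (if i then (T245N s q).1 else (T245N s q).2) * ((T245D s p : ℝ) : ℂ))
                 / (((T245D s p : ℝ) : ℂ) * ((T245D s q : ℝ) : ℂ))) := by
      have hDpc : ((T245D s p : ℝ) : ℂ) ≠ 0 := by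
        exact_mod_cast ne_of_gt hDp
      have hDqc : ((T245D s q : ℝ) : ℂ) ≠ 0 := by
        exact_mod_cast ne_of_gt hDq
      cases i <;>
      · simp only [T245V, if_neg (ne_of_gt hDp), if_neg (ne_of_gt hDq), Prod.fst_sub,
          Prod.snd_sub, Prod.smul_fst, Prod.smul_snd, smul_eq_mul, if_pos,
          if_neg Bool.false_ne_true]
        field_simp
        ring
    rw [key, norm_mul, norm_neg, norm_div]
    have hden : ‖(((T245D s p : ℝ) : ℂ) * ((T245D s q : ℝ) : ℂ))‖
        = T245D s p * T245D s q := by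
      rw [norm_mul, Complex.norm_real, Complex.norm_real, Real.norm_eq_abs,
        Real.norm_eq_abs, abs_of_pos hDp, abs_of_pos hDq]
    rw [hden]
    have h2 : ‖(if i then (T245N s p).1 else (T245N s p).2) * ((T245D s q : ℝ) : ℂ)
        - (if i then (T245N s q).1 else (T245N s q).2) * ((T245D s p : ℝ) : ℂ)‖
        ≤ A * (T245k₀ μ^2 * (T245D s p * T245D s q)) * δ := by
      refine le_trans (hnum i) ?_
      exact mul_le_mul_of_nonneg_right (mul_le_mul_of_nonneg_left hpq4 hA.le) hδnn
    have h3 : ‖(if i then (T245N s p).1 else (T245N s p).2) * ((T245D s q : ℝ) : ℂ)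
        - (if i then (T245N s q).1 else (T245N s q).2) * ((T245D s p : ℝ) : ℂ)‖
        / (T245D s p * T245D s q) ≤ T245k₀ μ^2 * A * δ := by
      rw [div_le_iff₀ (by positivity)]
      nlinarith [h2]
    calc ‖c‖ * (_ / (T245D s p * T245D s q)) ≤ ‖c‖ * (T245k₀ μ^2 * A * δ) :=
      mul_le_mul_of_nonneg_left h3 (norm_nonneg c)
    _ = ‖c‖ * (T245k₀ μ^2 * A) * δ := by ring
  have hfin : ‖T245V c s p - T245V c s q‖ ≤ ‖c‖ * (T245k₀ μ^2 * A) * δ :=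
    T245prod_norm_le (by simpa using hcomp true) (by simpa using hcomp false)
  calc ‖T245V c s p - T245V c s q‖ ≤ ‖c‖ * (T245k₀ μ^2 * A) * δ := hfin
  _ ≤ ‖c‖ * T245CV μ * δ := by
      have hle : T245k₀ μ^2 * A ≤ T245CV μ := by
        unfold T245CV
        rw [← hA_def]
        nlinarith [mul_pos hkN hk₀]
      exact mul_le_mul_of_nonneg_right
        (mul_le_mul_of_nonneg_left hle (norm_nonneg c)) hδnn

lemma T245V_lip {μ : ℝ} (hμ : 0 < μ) {s : ℂ} (hsl : μ ≤ ‖s‖) (hsu : ‖s‖ ≤ 4*μ)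
    {p q : ℂ × ℂ} (hp : ‖p‖ ≤ T245r₀ μ) (hq : ‖q‖ ≤ T245r₀ μ) (c : ℂ) :
    ‖T245V c s p - T245V c s q‖ ≤ ‖c‖ * T245CV μ * ‖p - q‖ := by
  rcases le_total ‖q‖ ‖p‖ with h | h
  · exact T245V_lip_aux hμ hsl hsu hp hq h c
  · have := T245V_lip_aux hμ hsl hsu hq hp h c
    rwa [norm_sub_rev (T245V c s q), norm_sub_rev q] at this

/-- radial clamp onto the closed ball of radius `r₀ μ`. -/
def T245clamp (μ : ℝ) (p : ℂ × ℂ) : ℂ × ℂ :=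
  if ‖p‖ ≤ T245r₀ μ then p else ((T245r₀ μ)/‖p‖) • p

lemma T245clamp_eq {μ : ℝ} {p : ℂ × ℂ} (h : ‖p‖ ≤ T245r₀ μ) : T245clamp μ p = p :=
  if_pos h

lemma T245clamp_norm {μ : ℝ} (hμ : 0 < μ) (p : ℂ × ℂ) : ‖T245clamp μ p‖ ≤ T245r₀ μ := by
  unfold T245clamp
  split_ifs with h
  · exact h
  · push_neg at h
    have hp : 0 < ‖p‖ := lt_trans (T245r₀_pos hμ) h
    rw [norm_smul, Real.norm_eq_abs, abs_of_pos (div_pos (T245r₀_pos hμ) hp)]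
    rw [div_mul_cancel₀]
    exact ne_of_gt hp

lemma T245clamp_lip_aux {μ : ℝ} (hμ : 0 < μ) {p q : ℂ × ℂ}
    (hp : ‖p‖ ≤ T245r₀ μ) (hq : ¬ ‖q‖ ≤ T245r₀ μ) :
    ‖T245clamp μ p - T245clamp μ q‖ ≤ 2*‖p - q‖ := by
  push_neg at hq
  have hq0 : 0 < ‖q‖ := lt_trans (T245r₀_pos hμ) hq
  rw [T245clamp_eq hp]
  unfold T245clamp
  rw [if_neg (not_le.2 hq)]
  have e1 : p - (T245r₀ μ/‖q‖) • q = (p - q) + (q - (T245r₀ μ/‖q‖) • q) := by abel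
  have e2 : q - (T245r₀ μ/‖q‖) • q = (1 - T245r₀ μ/‖q‖) • q := by
    rw [sub_smul, one_smul]
  have e3 : ‖q - (T245r₀ μ/‖q‖) • q‖ = ‖q‖ - T245r₀ μ := by
    rw [e2, norm_smul, Real.norm_eq_abs, abs_of_nonneg, sub_mul, one_mul,
      div_mul_cancel₀ _ (ne_of_gt hq0)]
    rw [sub_nonneg, div_le_one hq0]
    exact hq.le
  have e4 : ‖q‖ - T245r₀ μ ≤ ‖p - q‖ := by
    have := norm_sub_norm_le q p
    rw [norm_sub_rev] at this
    linarith
  calc ‖p - (T245r₀ μ/‖q‖) • q‖ ≤ ‖p - q‖ + ‖q - (T245r₀ μ/‖q‖) • q‖ := by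
        rw [e1]; exact norm_add_le _ _
  _ ≤ 2*‖p - q‖ := by rw [e3]; linarith

lemma T245clamp_lip {μ : ℝ} (hμ : 0 < μ) (p q : ℂ × ℂ) :
    ‖T245clamp μ p - T245clamp μ q‖ ≤ 2*‖p - q‖ := by
  by_cases hp : ‖p‖ ≤ T245r₀ μ <;> by_cases hq : ‖q‖ ≤ T245r₀ μ
  · rw [T245clamp_eq hp, T245clamp_eq hq]
    linarith [norm_nonneg (p - q)]
  · exact T245clamp_lip_aux hμ hp hq
  · rw [norm_sub_rev, norm_sub_rev p]
    exact T245clamp_lip_aux hμ hq hp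
  · push_neg at hp hq
    have hp0 : 0 < ‖p‖ := lt_trans (T245r₀_pos hμ) hp
    have hq0 : 0 < ‖q‖ := lt_trans (T245r₀_pos hμ) hq
    have hr0 : 0 < T245r₀ μ := T245r₀_pos hμ
    unfold T245clamp
    rw [if_neg (not_le.2 hp), if_neg (not_le.2 hq)]
    have key : (T245r₀ μ/‖p‖) • p - (T245r₀ μ/‖q‖) • q
        = (T245r₀ μ/‖p‖) • (p - q) + ((T245r₀ μ/‖p‖) - (T245r₀ μ/‖q‖)) • q := by
      rw [smul_sub, sub_smul]; abel
    have h1 : ‖(T245r₀ μ/‖p‖) • (p - q)‖ ≤ ‖p - q‖ := by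
      rw [norm_smul, Real.norm_eq_abs, abs_of_pos (by positivity)]
      have : T245r₀ μ/‖p‖ ≤ 1 := by rw [div_le_one hp0]; exact hp.le
      nlinarith [norm_nonneg (p - q)]
    have h2 : ‖((T245r₀ μ/‖p‖) - (T245r₀ μ/‖q‖)) • q‖ ≤ ‖p - q‖ := by
      rw [norm_smul, Real.norm_eq_abs]
      have e : (T245r₀ μ/‖p‖) - (T245r₀ μ/‖q‖) = T245r₀ μ * (‖q‖ - ‖p‖)/(‖p‖*‖q‖) := by
        field_simp
      rw [e, abs_div, abs_mul, abs_of_pos hr0, abs_of_pos (by positivity : (0:ℝ) < ‖p‖*‖q‖)]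
      have habs : |‖q‖ - ‖p‖| ≤ ‖p - q‖ := by
        rw [abs_sub_comm]
        exact abs_norm_sub_norm_le p q
      have e2 : T245r₀ μ*|‖q‖ - ‖p‖|/(‖p‖*‖q‖)*‖q‖ = (T245r₀ μ/‖p‖)*|‖q‖ - ‖p‖| := by
        field_simp
      rw [e2]
      calc (T245r₀ μ/‖p‖)*|‖q‖ - ‖p‖| ≤ 1*‖p - q‖ := by
            refine mul_le_mul ?_ habs (abs_nonneg _) zero_le_one
            rw [div_le_one hp0]; exact hp.le
      _ = ‖p - q‖ := one_mul _
    calc ‖(T245r₀ μ/‖p‖) • p - (T245r₀ μ/‖q‖) • q‖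
        ≤ ‖(T245r₀ μ/‖p‖) • (p - q)‖ + ‖((T245r₀ μ/‖p‖) - (T245r₀ μ/‖q‖)) • q‖ := by
          rw [key]; exact norm_add_le _ _
    _ ≤ 2*‖p - q‖ := by linarith

def T245u (τ : ℝ) : ℝ := max 0 (min 1 τ)
def T245s (t₀ t : ℂ) (τ : ℝ) : ℂ := t₀ + (T245u τ : ℝ) • (t - t₀)
def T245W (μ : ℝ) (t₀ t : ℂ) (τ : ℝ) (p : ℂ × ℂ) : ℂ × ℂ :=
  T245V (t - t₀) (T245s t₀ t τ) (T245clamp μ p)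

lemma T245u_nonneg (τ : ℝ) : 0 ≤ T245u τ := le_max_left _ _
lemma T245u_le_one (τ : ℝ) : T245u τ ≤ 1 :=
  max_le zero_le_one (min_le_left _ _)
lemma T245u_eq {τ : ℝ} (h : τ ∈ Set.Icc (0:ℝ) 1) : T245u τ = τ := by
  unfold T245u
  rw [min_eq_right h.2, max_eq_right h.1]

lemma T245s_bounds {μ : ℝ} (hμ : 0 < μ) {t₀ t : ℂ} (h2μ : ‖t₀‖ = 2*μ)
    (hc : ‖t - t₀‖ ≤ μ) (τ : ℝ) :
    μ ≤ ‖T245s t₀ t τ‖ ∧ ‖T245s t₀ t τ‖ ≤ 4*μ := by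
  have hu0 := T245u_nonneg τ
  have hu1 := T245u_le_one τ
  have husmul : ‖(T245u τ : ℝ) • (t - t₀)‖ ≤ μ := by
    rw [norm_smul, Real.norm_eq_abs, abs_of_nonneg hu0]
    calc T245u τ * ‖t - t₀‖ ≤ 1 * μ := by
          exact mul_le_mul hu1 hc (norm_nonneg _) zero_le_one
    _ = μ := one_mul μ
  constructor
  · have := T245_norm_add_lower t₀ ((T245u τ : ℝ) • (t - t₀))
    unfold T245s
    rw [h2μ] at this
    linarith
  · unfold T245s
    calc ‖t₀ + (T245u τ : ℝ) • (t - t₀)‖ ≤ ‖t₀‖ + ‖(T245u τ : ℝ) • (t - t₀)‖ :=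
          norm_add_le _ _
    _ ≤ 4*μ := by rw [h2μ]; linarith

lemma T245W_lip {μ : ℝ} (hμ : 0 < μ) {t₀ t : ℂ} (h2μ : ‖t₀‖ = 2*μ)
    (hc : ‖t - t₀‖ ≤ μ) (τ : ℝ) (p q : ℂ × ℂ) :
    ‖T245W μ t₀ t τ p - T245W μ t₀ t τ q‖ ≤ (2*‖t - t₀‖*T245CV μ) * ‖p - q‖ := by
  obtain ⟨hsl, hsu⟩ := T245s_bounds hμ h2μ hc τ
  have h1 := T245V_lip hμ hsl hsu (T245clamp_norm hμ p) (T245clamp_norm hμ q) (t - t₀)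
  have h2 := T245clamp_lip hμ p q
  unfold T245W
  calc ‖T245V (t - t₀) (T245s t₀ t τ) (T245clamp μ p)
      - T245V (t - t₀) (T245s t₀ t τ) (T245clamp μ q)‖
      ≤ ‖t - t₀‖ * T245CV μ * ‖T245clamp μ p - T245clamp μ q‖ := h1
  _ ≤ ‖t - t₀‖ * T245CV μ * (2*‖p - q‖) :=
      mul_le_mul_of_nonneg_left h2 (mul_nonneg (norm_nonneg _) (T245CV_pos hμ).le)
  _ = (2*‖t - t₀‖*T245CV μ) * ‖p - q‖ := by ring

lemma T245W_norm {μ : ℝ} (hμ : 0 < μ) {t₀ t : ℂ} (h2μ : ‖t₀‖ = 2*μ)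
    (hc : ‖t - t₀‖ ≤ μ) (τ : ℝ) (p : ℂ × ℂ) :
    ‖T245W μ t₀ t τ p‖ ≤ ‖t - t₀‖ * (T245kN μ * T245k₀ μ) * T245r₀ μ := by
  obtain ⟨hsl, hsu⟩ := T245s_bounds hμ h2μ hc τ
  have h1 := T245V_norm hμ hsl hsu (T245clamp_norm hμ p) (t - t₀)
  unfold T245W
  calc ‖T245V (t - t₀) (T245s t₀ t τ) (T245clamp μ p)‖
      ≤ ‖t - t₀‖ * (T245kN μ * T245k₀ μ) * ‖T245clamp μ p‖ := h1
  _ ≤ ‖t - t₀‖ * (T245kN μ * T245k₀ μ) * T245r₀ μ := by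
      refine mul_le_mul_of_nonneg_left (T245clamp_norm hμ p) ?_
      have h8 := T245k₀_pos hμ
      have h9 : (0:ℝ) < T245kN μ := by unfold T245kN; positivity
      positivity

lemma T245W_zero {μ : ℝ} (hμ : 0 < μ) (t₀ t : ℂ) (τ : ℝ) : T245W μ t₀ t τ 0 = 0 := by
  unfold T245W
  rw [T245clamp_eq (by simpa using (T245r₀_pos hμ).le), T245V_zero]

lemma T245W_ode {μ : ℝ} (hμ : 0 < μ) {t₀ t : ℂ} (h2μ : ‖t₀‖ = 2*μ)
    (hc : ‖t - t₀‖ ≤ μ) (τ : ℝ) {p : ℂ × ℂ} (hp : ‖p‖ ≤ T245r₀ μ) :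
    (t - t₀)*p.1^2*p.2^2
      + ((4*p.1^3 + 2*(T245s t₀ t τ)*p.1*p.2^2) * (T245W μ t₀ t τ p).1
        + (5*p.2^4 + 2*(T245s t₀ t τ)*p.1^2*p.2) * (T245W μ t₀ t τ p).2) = 0 := by
  obtain ⟨hsl, hsu⟩ := T245s_bounds hμ h2μ hc τ
  set s := T245s t₀ t τ with hs_def
  unfold T245W
  rw [T245clamp_eq hp]
  by_cases hp0 : p = 0
  · rw [hp0, T245V_zero]
    simp
  · have hD : 0 < T245D s p := T245D_pos hμ hsl hsu hp hp0
    have hDc : ((T245D s p : ℝ) : ℂ) ≠ 0 := by exact_mod_cast ne_of_gt hD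
    have hmain : (4*p.1^3 + 2*s*p.1*p.2^2) * (T245N s p).1
        + (5*p.2^4 + 2*s*p.1^2*p.2) * (T245N s p).2
        = p.1^2*p.2^2*((T245D s p : ℝ) : ℂ) := by
      unfold T245N T245D T245d1 T245d2
      simp only
      push_cast
      rw [← Complex.mul_conj', ← Complex.mul_conj']
      ring
    unfold T245V
    rw [if_neg (ne_of_gt hD)]
    have hexp : ∀ w : ℂ × ℂ, ((-( (t - t₀) / ((T245D s p : ℝ) : ℂ))) • w).1
        = (-((t - t₀) / ((T245D s p : ℝ) : ℂ))) * w.1 := fun w => rfl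
    have hexp2 : ∀ w : ℂ × ℂ, ((-( (t - t₀) / ((T245D s p : ℝ) : ℂ))) • w).2
        = (-((t - t₀) / ((T245D s p : ℝ) : ℂ))) * w.2 := fun w => rfl
    rw [hexp, hexp2]
    have : (4*p.1^3 + 2*s*p.1*p.2^2) * ((-((t - t₀) / ((T245D s p : ℝ) : ℂ))) * (T245N s p).1)
        + (5*p.2^4 + 2*s*p.1^2*p.2) * ((-((t - t₀) / ((T245D s p : ℝ) : ℂ))) * (T245N s p).2)
        = (-((t - t₀) / ((T245D s p : ℝ) : ℂ)))
          * ((4*p.1^3 + 2*s*p.1*p.2^2) * (T245N s p).1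
            + (5*p.2^4 + 2*s*p.1^2*p.2) * (T245N s p).2) := by ring
    rw [this, hmain]
    field_simp
    ring

lemma T245u_cont : Continuous T245u :=
  continuous_const.max (continuous_const.min continuous_id)

lemma T245s_cont (t₀ t : ℂ) : Continuous (T245s t₀ t) :=
  continuous_const.add (T245u_cont.smul continuous_const)

lemma T245W_cont {μ : ℝ} (hμ : 0 < μ) {t₀ t : ℂ} (h2μ : ‖t₀‖ = 2*μ)
    (hc : ‖t - t₀‖ ≤ μ) (p : ℂ × ℂ) :
    Continuous (fun τ => T245W μ t₀ t τ p) := by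
  set pc := T245clamp μ p with hpc_def
  have hpc : ‖pc‖ ≤ T245r₀ μ := T245clamp_norm hμ p
  by_cases h0 : pc = 0
  · have : (fun τ => T245W μ t₀ t τ p) = fun _ => 0 := by
      funext τ
      unfold T245W
      rw [← hpc_def, h0, T245V_zero]
    rw [this]; exact continuous_const
  · have hD : ∀ τ, T245D (T245s t₀ t τ) pc ≠ 0 := by
      intro τ
      obtain ⟨hsl, hsu⟩ := T245s_bounds hμ h2μ hc τ
      exact ne_of_gt (T245D_pos hμ hsl hsu hpc h0)
    have heq : (fun τ => T245W μ t₀ t τ p)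
        = fun τ => (-( (t - t₀) / ((T245D (T245s t₀ t τ) pc : ℝ) : ℂ)))
            • T245N (T245s t₀ t τ) pc := by
      funext τ
      unfold T245W T245V
      rw [← hpc_def, if_neg (hD τ)]
    rw [heq]
    have hs := T245s_cont t₀ t
    have hd1c : Continuous (fun τ => T245d1 (T245s t₀ t τ) pc) := by
      unfold T245d1; exact continuous_const.add (hs.mul continuous_const)
    have hd2c : Continuous (fun τ => T245d2 (T245s t₀ t τ) pc) := by
      unfold T245d2
      exact continuous_const.add ((continuous_const.mul hs).mul continuous_const)
    have hDc : Continuous (fun τ => T245D (T245s t₀ t τ) pc) := by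
      unfold T245D
      exact (continuous_const.mul ((hd1c.norm).pow 2)).add ((hd2c.norm).pow 2)
    have hN1c : Continuous (fun τ => (T245N (T245s t₀ t τ) pc).1) := by
      unfold T245N
      exact continuous_const.mul (continuous_star.comp hd1c)
    have hN2c : Continuous (fun τ => (T245N (T245s t₀ t τ) pc).2) := by
      unfold T245N
      exact continuous_const.mul (continuous_star.comp hd2c)
    have hNc : Continuous (fun τ => T245N (T245s t₀ t τ) pc) := hN1c.prodMk hN2c
    have hscal : Continuous (fun τ =>
        -((t - t₀) / ((T245D (T245s t₀ t τ) pc : ℝ) : ℂ))) := by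
      refine Continuous.neg ?_
      refine Continuous.div continuous_const (Complex.continuous_ofReal.comp hDc) ?_
      intro τ
      simpa using hD τ
    exact hscal.smul hNc

lemma T245kNk0_le_CV {μ : ℝ} (hμ : 0 < μ) : T245kN μ * T245k₀ μ ≤ T245CV μ := by
  have hk₀ := T245k₀_pos hμ
  have hkN : 0 < T245kN μ := by unfold T245kN; positivity
  have hkD : 0 < T245kD μ := by unfold T245kD; positivity
  have hCN : 0 < T245CN μ := by unfold T245CN; positivity
  have hCD : 0 < T245CD μ := by unfold T245CD; positivity
  unfold T245CV
  nlinarith [mul_nonneg (sq_nonneg (T245k₀ μ))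
    (by positivity : (0:ℝ) ≤ T245CN μ * T245kD μ + T245kN μ * T245CD μ)]

lemma T245exp_le_3 {x : ℝ} (hx : x ≤ 1) : Real.exp x ≤ 3 :=
  le_trans (Real.exp_le_exp.2 hx)
    (le_of_lt (lt_trans Real.exp_one_lt_d9 (by norm_num)))

lemma T245core (t₀ : ℂ) (h₀ : t₀ ≠ 0) (t : ℂ)
    (hc : ‖t - t₀‖ ≤ min (‖t₀‖/2) (1/(8*(T245CV (‖t₀‖/2) + 1)))) :
    ∃ r : ℝ, 0 < r ∧ ∃ φ : ℂ × ℂ → ℂ × ℂ, φ 0 = 0 ∧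
      (∀ p, ‖p‖ ≤ r → ∀ q, ‖q‖ ≤ r →
        ‖φ p - φ q‖ ≤ 3*‖p - q‖ ∧ ‖p - q‖ ≤ 3*‖φ p - φ q‖) ∧
      (∀ p, ‖p‖ ≤ r → (φ p).1^4 + (φ p).2^5 + t*(φ p).1^2*(φ p).2^2
          = p.1^4 + p.2^5 + t₀*p.1^2*p.2^2) := by
  set μ := ‖t₀‖/2 with hμ_def
  have ht₀pos : 0 < ‖t₀‖ := norm_pos_iff.2 h₀
  have hμ : 0 < μ := by rw [hμ_def]; linarith
  have h2μ : ‖t₀‖ = 2*μ := by rw [hμ_def]; ring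
  have hcμ : ‖t - t₀‖ ≤ μ := le_trans hc (min_le_left _ _)
  have hCV := T245CV_pos hμ
  have hcsmall : ‖t - t₀‖ ≤ 1/(8*(T245CV μ + 1)) := le_trans hc (min_le_right _ _)
  set Kw := 2*‖t - t₀‖*T245CV μ with hKw_def
  have hKw0 : 0 ≤ Kw := by rw [hKw_def]; positivity
  have hKw : Kw ≤ 1/4 := by
    have h1 : ‖t - t₀‖ * T245CV μ ≤ (1/(8*(T245CV μ + 1))) * T245CV μ :=
      mul_le_mul_of_nonneg_right hcsmall hCV.le
    have h2 : (1/(8*(T245CV μ + 1))) * T245CV μ ≤ 1/8 := by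
      rw [div_mul_eq_mul_div, div_le_div_iff₀ (by positivity) (by norm_num)]
      nlinarith
    rw [hKw_def]; linarith
  set Knn : NNReal := Real.toNNReal Kw with hKnn_def
  have hKnn : (Knn : ℝ) = Kw := Real.coe_toNNReal _ hKw0
  have hWlip : ∀ τ, LipschitzWith Knn (T245W μ t₀ t τ) := by
    intro τ
    refine LipschitzWith.of_dist_le_mul fun x y => ?_
    rw [dist_eq_norm, dist_eq_norm, hKnn]
    exact T245W_lip hμ h2μ hcμ τ x y
  have hr₀ := T245r₀_pos hμ
  set r := T245r₀ μ/4 with hr_def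
  have hr : 0 < r := by rw [hr_def]; positivity
  have hWnorm1 : ∀ τ (x : ℂ × ℂ), ‖T245W μ t₀ t τ x‖ ≤ T245r₀ μ := by
    intro τ x
    have h1 := T245W_norm hμ h2μ hcμ τ x
    have h2 : ‖t - t₀‖ * (T245kN μ * T245k₀ μ) ≤ 1 := by
      have h3 : ‖t - t₀‖ * (T245kN μ * T245k₀ μ) ≤ ‖t - t₀‖ * T245CV μ :=
        mul_le_mul_of_nonneg_left (T245kNk0_le_CV hμ) (norm_nonneg _)
      have h4 : 2*(‖t - t₀‖ * T245CV μ) = Kw := by rw [hKw_def]; ring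
      linarith
    calc ‖T245W μ t₀ t τ x‖ ≤ ‖t - t₀‖ * (T245kN μ * T245k₀ μ) * T245r₀ μ := h1
    _ ≤ 1 * T245r₀ μ := mul_le_mul_of_nonneg_right h2 hr₀.le
    _ = T245r₀ μ := one_mul _
  have hPL : ∀ z : ℂ × ℂ, IsPicardLindelof (T245W μ t₀ t) (tmin := 0) (tmax := 1)
      ⟨0, ⟨le_refl 0, zero_le_one⟩⟩ z (Real.toNNReal (2*T245r₀ μ)) 0
      (Real.toNNReal (T245r₀ μ)) Knn := by
    intro z
    refine ⟨fun τ _ => (hWlip τ).lipschitzOnWith,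
      fun x _ => (T245W_cont hμ h2μ hcμ x).continuousOn,
      fun τ _ x _ => ?_, ?_⟩
    · rw [Real.coe_toNNReal _ hr₀.le]; exact hWnorm1 τ x
    · have hm : max ((1:ℝ) - 0) (0 - 0) = 1 := by norm_num
      simp only [Real.coe_toNNReal _ hr₀.le, Real.coe_toNNReal _ (by positivity : (0:ℝ) ≤ 2*T245r₀ μ),
        NNReal.coe_zero, hm, mul_one]
      linarith
  have hex : ∀ z : ℂ × ℂ, ∃ α : ℝ → ℂ × ℂ, α 0 = z ∧
      ∀ τ ∈ Set.Icc (0:ℝ) 1, HasDerivWithinAt α (T245W μ t₀ t τ (α τ))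
        (Set.Icc (0:ℝ) 1) τ :=
    fun z => (hPL z).exists_eq_forall_mem_Icc_hasDerivWithinAt₀
  choose αs hαs0 hαsd using hex
  have hcontOn : ∀ z, ContinuousOn (αs z) (Set.Icc 0 1) :=
    fun z τ hτ => (hαsd z τ hτ).continuousWithinAt
  have hIci : ∀ z, ∀ τ ∈ Set.Ico (0:ℝ) 1,
      HasDerivWithinAt (αs z) (T245W μ t₀ t τ (αs z τ)) (Set.Ici τ) τ :=
    fun z τ hτ => (hαsd z τ (Set.Ico_subset_Icc_self hτ)).mono_of_mem_nhdsWithin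
      (Icc_mem_nhdsGE_of_mem hτ)
  have hζ : ∀ τ ∈ Set.Ico (0:ℝ) 1,
      HasDerivWithinAt (fun _ : ℝ => (0:ℂ × ℂ))
        (T245W μ t₀ t τ ((fun _ : ℝ => (0:ℂ × ℂ)) τ)) (Set.Ici τ) τ := by
    intro τ _
    simp only [T245W_zero hμ]
    exact hasDerivWithinAt_const _ _ _
  have hgron : ∀ z w, ∀ τ ∈ Set.Icc (0:ℝ) 1,
      dist (αs z τ) (αs w τ) ≤ dist z w * Real.exp (Knn*τ) := by
    intro z w τ hτ
    have ha : dist (αs z 0) (αs w 0) ≤ dist z w := by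
      rw [hαs0 z, hαs0 w]
    have h1 := dist_le_of_trajectories_ODE hWlip (hcontOn z) (hIci z) (hcontOn w)
      (hIci w) ha τ hτ
    simpa using h1
  have hstay : ∀ z, ‖z‖ ≤ r → ∀ τ ∈ Set.Icc (0:ℝ) 1, ‖αs z τ‖ ≤ T245r₀ μ := by
    intro z hz τ hτ
    have ha : dist (αs z 0) ((fun _ : ℝ => (0:ℂ × ℂ)) 0) ≤ ‖z‖ := by
      rw [hαs0 z]
      simp [dist_zero_right]
    have h1 := dist_le_of_trajectories_ODE hWlip (hcontOn z) (hIci z) continuousOn_const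
      hζ ha τ hτ
    have h2 : dist (αs z τ) 0 = ‖αs z τ‖ := by simp [dist_eq_norm]
    have h3 : Real.exp (Knn*(τ - 0)) ≤ 3 := by
      refine T245exp_le_3 ?_
      rw [sub_zero]
      have := hτ.1
      have := hτ.2
      nlinarith [hKnn, hKw, hKw0]
    rw [h2] at h1
    calc ‖αs z τ‖ ≤ ‖z‖ * Real.exp (Knn*(τ - 0)) := h1
    _ ≤ r * 3 := by
        refine mul_le_mul hz h3 (Real.exp_nonneg _) hr.le
    _ ≤ T245r₀ μ := by rw [hr_def]; linarith
  -- the time-one map is our φ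
  have hzero : αs 0 1 = 0 := by
    have hu := ODE_solution_unique (v := T245W μ t₀ t) hWlip (hcontOn 0) (hIci 0)
      continuousOn_const hζ (by rw [hαs0 0])
    exact hu ⟨zero_le_one, le_refl 1⟩
  -- reversed flow for the lower Lipschitz bound
  set Wrev : ℝ → (ℂ × ℂ) → (ℂ × ℂ) := fun τ x => -(T245W μ t₀ t (1-τ) x) with hWrev_def
  have hWrevlip : ∀ τ, LipschitzWith Knn (Wrev τ) := by
    intro τ
    refine LipschitzWith.of_dist_le_mul fun x y => ?_
    rw [hWrev_def]
    simp only [dist_neg_neg]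
    rw [dist_eq_norm, dist_eq_norm, hKnn]
    exact T245W_lip hμ h2μ hcμ (1-τ) x y
  have hmaps : Set.MapsTo (fun τ' : ℝ => 1 - τ') (Set.Icc 0 1) (Set.Icc 0 1) := by
    intro x hx
    simp only [Set.mem_Icc] at hx ⊢
    constructor <;> linarith [hx.1, hx.2]
  have hβd : ∀ z, ∀ τ ∈ Set.Ico (0:ℝ) 1,
      HasDerivWithinAt (fun τ' => αs z (1 - τ'))
        (Wrev τ ((fun τ' => αs z (1 - τ')) τ)) (Set.Ici τ) τ := by
    intro z τ hτ
    have h1τ : (1:ℝ) - τ ∈ Set.Icc (0:ℝ) 1 := ⟨by linarith [hτ.2], by linarith [hτ.1]⟩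
    have houter := hαsd z (1-τ) h1τ
    have hinner : HasDerivWithinAt (fun τ' : ℝ => 1 - τ') (-1) (Set.Icc 0 1) τ := by
      simpa using (hasDerivWithinAt_id τ (Set.Icc (0:ℝ) 1)).const_sub 1
    have hcomp := HasDerivWithinAt.scomp τ houter hinner hmaps
    have hIcc : HasDerivWithinAt (fun τ' => αs z (1 - τ'))
        (Wrev τ (αs z (1 - τ))) (Set.Icc 0 1) τ := by
      have : ((-1 : ℝ) • T245W μ t₀ t (1-τ) (αs z (1-τ)))
          = Wrev τ (αs z (1 - τ)) := by
        rw [hWrev_def]; simp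
      rw [← this]
      exact hcomp
    exact hIcc.mono_of_mem_nhdsWithin
      (Icc_mem_nhdsGE_of_mem (Set.mem_Ico.2 ⟨hτ.1, hτ.2⟩))
  have hβcont : ∀ z, ContinuousOn (fun τ' => αs z (1 - τ')) (Set.Icc 0 1) := by
    intro z
    exact (hcontOn z).comp (continuous_const.sub continuous_id).continuousOn hmaps
  have hgronrev : ∀ z w, dist z w ≤ dist (αs z 1) (αs w 1) * Real.exp (Knn*1) := by
    intro z w
    have ha : dist ((fun τ' => αs z (1 - τ')) 0) ((fun τ' => αs w (1 - τ')) 0)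
        ≤ dist (αs z 1) (αs w 1) := by norm_num
    have h1 := dist_le_of_trajectories_ODE hWrevlip (hβcont z) (hβd z) (hβcont w)
      (hβd w) ha 1 ⟨zero_le_one, le_refl 1⟩
    have h2 : (1:ℝ) - 1 = 0 := by norm_num
    rw [h2] at h1
    rw [hαs0 z, hαs0 w] at h1
    simpa using h1
  have hexpKnn : Real.exp ((Knn:ℝ)*1) ≤ 3 := by
    refine T245exp_le_3 ?_
    rw [hKnn, mul_one]
    linarith
  refine ⟨r, hr, fun z => αs z 1, hzero, ?_, ?_⟩
  · intro p hp q hq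
    constructor
    · have h1 := hgron p q 1 ⟨zero_le_one, le_refl 1⟩
      rw [dist_eq_norm, dist_eq_norm] at h1
      calc ‖αs p 1 - αs q 1‖ ≤ ‖p - q‖ * Real.exp (Knn*1) := h1
      _ ≤ ‖p - q‖ * 3 := mul_le_mul_of_nonneg_left hexpKnn (norm_nonneg _)
      _ = 3*‖p - q‖ := by ring
    · have h1 := hgronrev p q
      rw [dist_eq_norm, dist_eq_norm] at h1
      calc ‖p - q‖ ≤ ‖αs p 1 - αs q 1‖ * Real.exp (Knn*1) := h1
      _ ≤ ‖αs p 1 - αs q 1‖ * 3 := mul_le_mul_of_nonneg_left hexpKnn (norm_nonneg _)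
      _ = 3*‖αs p 1 - αs q 1‖ := by ring
  · intro p hp
    set h : ℝ → ℂ := fun τ =>
      ((αs p τ).1*(αs p τ).1)*((αs p τ).1*(αs p τ).1)
      + ((((αs p τ).2*(αs p τ).2)*((αs p τ).2*(αs p τ).2))*(αs p τ).2)
      + ((T245s t₀ t τ)*((αs p τ).1*(αs p τ).1))*((αs p τ).2*(αs p τ).2) with hh_def
    have hA_cont : ContinuousOn (fun τ => (αs p τ).1) (Set.Icc 0 1) :=
      continuous_fst.comp_continuousOn (hcontOn p)
    have hB_cont : ContinuousOn (fun τ => (αs p τ).2) (Set.Icc 0 1) :=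
      continuous_snd.comp_continuousOn (hcontOn p)
    have hconth : ContinuousOn h (Set.Icc 0 1) := by
      rw [hh_def]
      exact (((hA_cont.mul hA_cont).mul (hA_cont.mul hA_cont)).add
        ((((hB_cont.mul hB_cont).mul (hB_cont.mul hB_cont)).mul hB_cont))).add
        (((T245s_cont t₀ t).continuousOn.mul (hA_cont.mul hA_cont)).mul
          (hB_cont.mul hB_cont))
    have hK : ∀ τ ∈ Set.Ico (0:ℝ) 1, HasDerivWithinAt h 0 (Set.Ici τ) τ := by
      intro τ hτ
      have hαd := hIci p τ hτ
      set Wv := T245W μ t₀ t τ (αs p τ) with hWv_def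
      have hA : HasDerivWithinAt (fun τ' => (αs p τ').1) Wv.1 (Set.Ici τ) τ :=
        (ContinuousLinearMap.fst ℝ ℂ ℂ).hasFDerivAt.comp_hasDerivWithinAt τ hαd
      have hB : HasDerivWithinAt (fun τ' => (αs p τ').2) Wv.2 (Set.Ici τ) τ :=
        (ContinuousLinearMap.snd ℝ ℂ ℂ).hasFDerivAt.comp_hasDerivWithinAt τ hαd
      have hsder : HasDerivWithinAt (T245s t₀ t) (t - t₀) (Set.Ici τ) τ := by
        have haff : HasDerivAt (fun x : ℝ => t₀ + x • (t - t₀)) (t - t₀) τ := by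
          simpa using ((hasDerivAt_id τ).smul_const (t - t₀)).const_add t₀
        refine HasDerivWithinAt.congr_of_eventuallyEq haff.hasDerivWithinAt ?_ ?_
        · have hmem : Set.Ici τ ∩ Set.Iio 1 ∈ nhdsWithin τ (Set.Ici τ) :=
            Filter.inter_mem self_mem_nhdsWithin
              (mem_nhdsWithin_of_mem_nhds (Iio_mem_nhds hτ.2))
          refine Filter.eventually_of_mem hmem ?_
          intro x hx
          unfold T245s
          rw [T245u_eq ⟨le_trans hτ.1 hx.1, le_of_lt hx.2⟩]
        · unfold T245s
          rw [T245u_eq ⟨hτ.1, hτ.2.le⟩]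
      have hA2 := hA.mul hA
      have hA4 := hA2.mul hA2
      have hB2 := hB.mul hB
      have hB4 := hB2.mul hB2
      have hB5 := hB4.mul hB
      have hm1 := hsder.mul hA2
      have hm2 := hm1.mul hB2
      have hsum := (hA4.add hB5).add hm2
      have hode := T245W_ode hμ h2μ hcμ τ (hstay p hp τ (Set.Ico_subset_Icc_self hτ))
      rw [← hWv_def] at hode
      rw [hh_def]
      convert hsum using 1
      case e'_9 =>
        simp only [Pi.mul_apply, Pi.add_apply]
        linear_combination -hode
      all_goals rfl
    have h10 : h 1 = h 0 := constant_of_has_deriv_right_zero hconth hK 1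
      ⟨zero_le_one, le_refl 1⟩
    have hs1 : T245s t₀ t 1 = t := by
      unfold T245s
      rw [T245u_eq ⟨zero_le_one, le_refl 1⟩]
      simp
    have hs0 : T245s t₀ t 0 = t₀ := by
      unfold T245s
      rw [T245u_eq ⟨le_refl 0, zero_le_one⟩]
      simp
    have he1 : h 1 = (αs p 1).1^4 + (αs p 1).2^5 + t*(αs p 1).1^2*(αs p 1).2^2 := by
      rw [hh_def]
      simp only
      rw [hs1]
      ring
    have he0 : h 0 = p.1^4 + p.2^5 + t₀*p.1^2*p.2^2 := by
      rw [hh_def]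
      simp only
      rw [hs0, hαs0 p]
      ring
    rw [← he1, h10, he0]

lemma T245E_normsq (v : EuclideanSpace ℂ (Fin 2)) : ‖v‖^2 = ‖v 0‖^2 + ‖v 1‖^2 := by
  rw [EuclideanSpace.norm_eq]
  rw [Real.sq_sqrt (by positivity)]
  simp [Fin.sum_univ_two]

lemma T245E_coord (v : EuclideanSpace ℂ (Fin 2)) (i : Fin 2) : ‖v i‖ ≤ ‖v‖ := by
  have h := T245E_normsq v
  have h0 : ‖v 0‖ ≤ ‖v‖ := by
    nlinarith [norm_nonneg (v 0), norm_nonneg (v 1), norm_nonneg v]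
  have h1 : ‖v 1‖ ≤ ‖v‖ := by
    nlinarith [norm_nonneg (v 0), norm_nonneg (v 1), norm_nonneg v]
  fin_cases i
  · exact h0
  · exact h1

end T245aux

open Metric

/-- The family `T₂,₄,₅ : f_t(x,y) = x⁴ + y⁵ + t·x²y²` (t ≠ 0) is bi-Lipschitz trivial. -/
theorem T245_biLipschitz_trivial
    (f : ℂ → EuclideanSpace ℂ (Fin 2) → ℂ)
    (hf : ∀ t : ℂ, ∀ v : EuclideanSpace ℂ (Fin 2),
      f t v = (v 0) ^ 4 + (v 1) ^ 5 + t * (v 0) ^ 2 * (v 1) ^ 2) :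
    ∀ t₀ : ℂ, t₀ ≠ 0 → ∃ T ∈ nhds t₀, (0 : ℂ) ∉ T ∧ ∀ t ∈ T,
      ∃ r : ℝ, 0 < r ∧ ∃ L : ℝ, 1 ≤ L ∧
        ∃ φ : EuclideanSpace ℂ (Fin 2) → EuclideanSpace ℂ (Fin 2),
          φ 0 = 0 ∧
          (∀ x ∈ ball (0 : EuclideanSpace ℂ (Fin 2)) r,
            ∀ y ∈ ball (0 : EuclideanSpace ℂ (Fin 2)) r,
              (1 / L) * ‖x - y‖ ≤ ‖φ x - φ y‖ ∧ ‖φ x - φ y‖ ≤ L * ‖x - y‖) ∧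
          ∀ x ∈ ball (0 : EuclideanSpace ℂ (Fin 2)) r, f t (φ x) = f t₀ x := by
  intro t₀ h₀
  have ht₀pos : 0 < ‖t₀‖ := norm_pos_iff.2 h₀
  have hμ : 0 < ‖t₀‖/2 := by linarith
  have hCV := T245CV_pos hμ
  set ε := min (‖t₀‖/2) (1/(8*(T245CV (‖t₀‖/2) + 1))) with hε_def
  have hε : 0 < ε := lt_min hμ (by positivity)
  refine ⟨ball t₀ ε, ball_mem_nhds t₀ hε, ?_, ?_⟩
  · intro hmem
    rw [mem_ball, dist_eq_norm, zero_sub, norm_neg] at hmem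
    have : ε ≤ ‖t₀‖/2 := min_le_left _ _
    linarith
  · intro t ht
    rw [mem_ball, dist_eq_norm] at ht
    obtain ⟨r, hr, φP, hφ0, hlip, hfun⟩ := T245core t₀ h₀ t (le_of_lt ht)
    set e : EuclideanSpace ℂ (Fin 2) → ℂ × ℂ := fun v => (v 0, v 1) with he_def
    set m : ℂ × ℂ → EuclideanSpace ℂ (Fin 2) :=
      fun w => (show EuclideanSpace ℂ (Fin 2) from WithLp.toLp 2 ![w.1, w.2]) with hm_def
    have hm0 : ∀ w : ℂ × ℂ, (m w) 0 = w.1 := fun w => rfl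
    have hm1 : ∀ w : ℂ × ℂ, (m w) 1 = w.2 := fun w => rfl
    have hmsubnorm : ∀ w w' : ℂ × ℂ, ‖m w - m w'‖^2 = ‖w.1 - w'.1‖^2 + ‖w.2 - w'.2‖^2 := by
      intro w w'
      rw [T245E_normsq]
      congr 1
    have hesub : ∀ x y : EuclideanSpace ℂ (Fin 2), e x - e y = e (x - y) := fun x y => rfl
    have he_le : ∀ v : EuclideanSpace ℂ (Fin 2), ‖e v‖ ≤ ‖v‖ := by
      intro v
      rw [Prod.norm_def]
      exact max_le (T245E_coord v 0) (T245E_coord v 1)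
    have hle_e : ∀ v : EuclideanSpace ℂ (Fin 2), ‖v‖ ≤ 2*‖e v‖ := by
      intro v
      have h1 := T245E_normsq v
      have h2 : ‖v 0‖ ≤ ‖e v‖ := by
        rw [Prod.norm_def]; exact le_max_left _ _
      have h3 : ‖v 1‖ ≤ ‖e v‖ := by
        rw [Prod.norm_def]; exact le_max_right _ _
      nlinarith [norm_nonneg v, norm_nonneg (e v), norm_nonneg (v 0), norm_nonneg (v 1)]
    refine ⟨r, hr, 6, by norm_num, fun v => m (φP (e v)), ?_, ?_, ?_⟩
    · have he0 : e 0 = 0 := rfl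
      show m (φP (e 0)) = 0
      rw [he0, hφ0]
      ext i
      fin_cases i <;> rfl
    · intro x hx y hy
      rw [mem_ball_zero_iff] at hx hy
      have hex : ‖e x‖ ≤ r := le_trans (he_le x) hx.le
      have hey : ‖e y‖ ≤ r := le_trans (he_le y) hy.le
      obtain ⟨hup, hlo⟩ := hlip (e x) hex (e y) hey
      set Δ := φP (e x) - φP (e y) with hΔ_def
      have hΔnorm : ‖m (φP (e x)) - m (φP (e y))‖^2 = ‖Δ.1‖^2 + ‖Δ.2‖^2 := by
        rw [hmsubnorm]
        rfl
      have hΔ1 : ‖Δ.1‖ ≤ ‖Δ‖ := norm_fst_le Δ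
      have hΔ2 : ‖Δ.2‖ ≤ ‖Δ‖ := norm_snd_le Δ
      have hΔmax : ‖Δ‖ = max ‖Δ.1‖ ‖Δ.2‖ := Prod.norm_def Δ
      have hub2 : ‖m (φP (e x)) - m (φP (e y))‖^2 ≤ 2*‖Δ‖^2 := by
        rw [hΔnorm]
        nlinarith [norm_nonneg Δ.1, norm_nonneg Δ.2, norm_nonneg Δ]
      have hlb2 : ‖Δ‖^2 ≤ ‖m (φP (e x)) - m (φP (e y))‖^2 := by
        rw [hΔnorm, hΔmax]
        rcases le_total ‖Δ.1‖ ‖Δ.2‖ with h | h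
        · rw [max_eq_right h]; nlinarith [norm_nonneg Δ.1]
        · rw [max_eq_left h]; nlinarith [norm_nonneg Δ.2]
      have hub : ‖m (φP (e x)) - m (φP (e y))‖ ≤ 2*‖Δ‖ := by
        nlinarith [norm_nonneg (m (φP (e x)) - m (φP (e y))), norm_nonneg Δ]
      have hlb : ‖Δ‖ ≤ ‖m (φP (e x)) - m (φP (e y))‖ := by
        nlinarith [norm_nonneg (m (φP (e x)) - m (φP (e y))), norm_nonneg Δ]
      have hexy : ‖e x - e y‖ ≤ ‖x - y‖ := by
        rw [hesub]; exact he_le _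
      have hxy_e : ‖x - y‖ ≤ 2*‖e x - e y‖ := by
        rw [hesub]; exact hle_e _
      constructor
      · -- lower bound : (1/6)‖x-y‖ ≤ ‖φx - φy‖
        have c1 : ‖x - y‖ ≤ 2*(3*‖Δ‖) := by
          calc ‖x - y‖ ≤ 2*‖e x - e y‖ := hxy_e
          _ ≤ 2*(3*‖Δ‖) := by linarith [hlo]
        calc (1/6)*‖x - y‖ ≤ (1/6)*(6*‖Δ‖) := by linarith
        _ = ‖Δ‖ := by ring
        _ ≤ ‖m (φP (e x)) - m (φP (e y))‖ := hlb
      · calc ‖m (φP (e x)) - m (φP (e y))‖ ≤ 2*‖Δ‖ := hub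
        _ ≤ 2*(3*‖e x - e y‖) := by linarith [hup]
        _ ≤ 6*‖x - y‖ := by linarith
    · intro x hx
      rw [mem_ball_zero_iff] at hx
      have hex : ‖e x‖ ≤ r := le_trans (he_le x) hx.le
      have := hfun (e x) hex
      rw [hf t, hf t₀]
      simpa [he_def, hm0, hm1] using this
end
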